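/- arXiv:2604.13732 — 5 statements merged into one kernel-verified Lean document; each statement's English description precedes it below -/
import Mathlib

section
/- Let n ≥ 1 and 0 < δ₁ < δ₂ ≤ n. Then for every function f : ℝⁿ → [0, ∞], ( ∫_{ℝⁿ} f dH^{δ₂}_∞ )^{1/δ₂} ≤ (δ₂/δ₁)^{1/δ₂} ( ∫_{ℝⁿ} f^{δ₁/δ₂} dH^{δ₁}_∞ )^{1/δ₁}. -/
open scoped ENNReal NNReal
open Metric Set Filter MeasureTheory

/-- The `δ`-dimensional Hausdorff content of a set `E ⊆ ℝⁿ`, defined via countable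
covers of `E` by open balls. -/
noncomputable def hausdorffContent (n : ℕ) (δ : ℝ)
    (E : Set (EuclideanSpace ℝ (Fin n))) : ℝ≥0∞ :=
  ⨅ (c : ℕ → EuclideanSpace ℝ (Fin n) × ℝ) (_ : ∀ i, 0 < (c i).2)
    (_ : E ⊆ ⋃ i, Metric.ball (c i).1 (c i).2),
    ∑' i, ENNReal.ofReal ((c i).2 ^ δ)

/-- The Choquet integral of `f : ℝⁿ → [0, ∞]` with respect to the `δ`-dimensional
Hausdorff content. -/
noncomputable def choquetIntegral (n : ℕ) (δ : ℝ)
    (f : EuclideanSpace ℝ (Fin n) → ℝ≥0∞) : ℝ≥0∞ :=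
  ∫⁻ t in Set.Ioi (0 : ℝ), hausdorffContent n δ {x | ENNReal.ofReal t < f x}

lemma hausdorffContent_mono {n : ℕ} {δ : ℝ} {E F : Set (EuclideanSpace ℝ (Fin n))}
    (h : E ⊆ F) : hausdorffContent n δ E ≤ hausdorffContent n δ F := by
  refine le_iInf fun c => le_iInf fun hc => le_iInf fun hF => ?_
  exact iInf_le_of_le c (iInf_le_of_le hc (iInf_le_of_le (h.trans hF) le_rfl))

lemma tsum_rpow_le_rpow_tsum (a : ℕ → ℝ≥0∞) {p : ℝ} (hp : 1 ≤ p) :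
    ∑' i, a i ^ p ≤ (∑' i, a i) ^ p := by
  have hp0 : 0 < p := lt_of_lt_of_le one_pos hp
  rcases eq_or_ne (∑' i, a i) 0 with h0 | h0
  · have hz : ∀ i, a i = 0 := fun i =>
      le_antisymm (le_trans (ENNReal.le_tsum i) h0.le) zero_le
    simp [hz, ENNReal.zero_rpow_of_pos hp0]
  rcases eq_or_ne (∑' i, a i) ∞ with htop | htop
  · rw [htop, ENNReal.top_rpow_of_pos hp0]; exact le_top
  have key : ∀ i, a i ^ p ≤ a i * (∑' j, a j) ^ (p - 1) := by
    intro i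
    have hfin : a i ≠ ∞ := fun h => htop (top_le_iff.1 (h ▸ ENNReal.le_tsum i))
    rcases eq_or_ne (a i) 0 with h | h
    · simp [h, ENNReal.zero_rpow_of_pos hp0]
    · calc a i ^ p = a i ^ (1 + (p - 1)) := by ring_nf
        _ = a i * a i ^ (p - 1) := by
            rw [ENNReal.rpow_add _ _ h hfin, ENNReal.rpow_one]
        _ ≤ a i * (∑' j, a j) ^ (p - 1) :=
            mul_le_mul_right (ENNReal.rpow_le_rpow (ENNReal.le_tsum i) (by linarith)) _
  calc ∑' i, a i ^ p ≤ ∑' i, a i * (∑' j, a j) ^ (p - 1) := ENNReal.tsum_le_tsum key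
    _ = (∑' j, a j) * (∑' j, a j) ^ (p - 1) := by rw [ENNReal.tsum_mul_right]
    _ = (∑' j, a j) ^ (1 + (p - 1)) := by
        rw [ENNReal.rpow_add_of_nonneg _ _ zero_le_one (by linarith), ENNReal.rpow_one]
    _ = (∑' j, a j) ^ p := by ring_nf

lemma hausdorffContent_le_rpow {n : ℕ} {δ₁ δ₂ : ℝ} (h1 : 0 < δ₁) (h12 : δ₁ ≤ δ₂)
    (E : Set (EuclideanSpace ℝ (Fin n))) :
    hausdorffContent n δ₂ E ≤ hausdorffContent n δ₁ E ^ (δ₂ / δ₁) := by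
  have h2 : 0 < δ₂ := lt_of_lt_of_le h1 h12
  have hq : 0 < δ₁ / δ₂ := div_pos h1 h2
  have hp1 : 1 ≤ δ₂ / δ₁ := (one_le_div h1).2 h12
  have key : hausdorffContent n δ₂ E ^ (δ₁ / δ₂) ≤ hausdorffContent n δ₁ E := by
    refine le_iInf fun c => le_iInf fun hc => le_iInf fun hcov => ?_
    have step1 : hausdorffContent n δ₂ E
        ≤ (∑' i, ENNReal.ofReal ((c i).2 ^ δ₁)) ^ (δ₂ / δ₁) := by
      have hle : hausdorffContent n δ₂ E ≤ ∑' i, ENNReal.ofReal ((c i).2 ^ δ₂) :=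
        iInf_le_of_le c (iInf_le_of_le hc (iInf_le_of_le hcov le_rfl))
      refine hle.trans ?_
      have heq : ∀ i, ENNReal.ofReal ((c i).2 ^ δ₂)
          = ENNReal.ofReal ((c i).2 ^ δ₁) ^ (δ₂ / δ₁) := by
        intro i
        rw [ENNReal.ofReal_rpow_of_pos (Real.rpow_pos_of_pos (hc i) δ₁),
          ← Real.rpow_mul (hc i).le]
        congr 2
        field_simp
      calc ∑' i, ENNReal.ofReal ((c i).2 ^ δ₂)
          = ∑' i, ENNReal.ofReal ((c i).2 ^ δ₁) ^ (δ₂ / δ₁) := tsum_congr heq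
        _ ≤ (∑' i, ENNReal.ofReal ((c i).2 ^ δ₁)) ^ (δ₂ / δ₁) :=
            tsum_rpow_le_rpow_tsum _ hp1
    calc hausdorffContent n δ₂ E ^ (δ₁ / δ₂)
        ≤ ((∑' i, ENNReal.ofReal ((c i).2 ^ δ₁)) ^ (δ₂ / δ₁)) ^ (δ₁ / δ₂) :=
          ENNReal.rpow_le_rpow step1 hq.le
      _ = (∑' i, ENNReal.ofReal ((c i).2 ^ δ₁)) ^ (δ₂ / δ₁ * (δ₁ / δ₂)) := by
          rw [← ENNReal.rpow_mul]
      _ = ∑' i, ENNReal.ofReal ((c i).2 ^ δ₁) := by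
          rw [show δ₂ / δ₁ * (δ₁ / δ₂) = 1 by field_simp, ENNReal.rpow_one]
  calc hausdorffContent n δ₂ E
      = (hausdorffContent n δ₂ E ^ (δ₁ / δ₂)) ^ (δ₂ / δ₁) := by
        rw [← ENNReal.rpow_mul, show δ₁ / δ₂ * (δ₂ / δ₁) = 1 by field_simp, ENNReal.rpow_one]
    _ ≤ hausdorffContent n δ₁ E ^ (δ₂ / δ₁) := ENNReal.rpow_le_rpow key (by positivity)

lemma hausdorffContent_layer_antitone {n : ℕ} {δ : ℝ}
    (g : EuclideanSpace ℝ (Fin n) → ℝ≥0∞) :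
    Antitone (fun t : ℝ => hausdorffContent n δ {x | ENNReal.ofReal t < g x}) :=
  fun _ _ htt' => hausdorffContent_mono fun _ hx =>
    lt_of_le_of_lt (ENNReal.ofReal_le_ofReal htt') hx

lemma hausdorffContent_chebyshev {n : ℕ} {δ : ℝ}
    (g : EuclideanSpace ℝ (Fin n) → ℝ≥0∞) {s : ℝ} (hs : 0 < s) :
    hausdorffContent n δ {x | ENNReal.ofReal s < g x}
      ≤ choquetIntegral n δ g / ENNReal.ofReal s := by
  rw [ENNReal.le_div_iff_mul_le (Or.inl (by simpa using hs))
    (Or.inl ENNReal.ofReal_ne_top)]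
  calc hausdorffContent n δ {x | ENNReal.ofReal s < g x} * ENNReal.ofReal s
      = ∫⁻ _ in Ioo (0:ℝ) s, hausdorffContent n δ {x | ENNReal.ofReal s < g x} := by
        rw [setLIntegral_const, Real.volume_Ioo, sub_zero]
    _ ≤ ∫⁻ t in Ioo (0:ℝ) s, hausdorffContent n δ {x | ENNReal.ofReal t < g x} :=
        setLIntegral_mono' measurableSet_Ioo fun t ht =>
          hausdorffContent_layer_antitone g ht.2.le
    _ ≤ choquetIntegral n δ g := lintegral_mono_set Ioo_subset_Ioi_self

lemma lintegral_comp_rpow_Ioi (h : ℝ → ℝ≥0∞) {q : ℝ} (hq : 0 < q) :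
    ∫⁻ t in Ioi (0:ℝ), ENNReal.ofReal (q * t ^ (q - 1)) * h (t ^ q)
      = ∫⁻ s in Ioi (0:ℝ), h s := by
  have himg : (fun t : ℝ => t ^ q) '' Ioi 0 = Ioi 0 := by
    ext x
    constructor
    · rintro ⟨y, hy, rfl⟩; exact Real.rpow_pos_of_pos hy q
    · intro hx
      refine ⟨x ^ (1 / q), Real.rpow_pos_of_pos hx _, ?_⟩
      show (x ^ (1 / q)) ^ q = x
      rw [← Real.rpow_mul hx.le, one_div_mul_cancel hq.ne', Real.rpow_one]
  have hderiv : ∀ x ∈ Ioi (0:ℝ), HasFDerivWithinAt (fun t : ℝ => t ^ q)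
      ((1 : ℝ →L[ℝ] ℝ).smulRight (q * x ^ (q - 1))) (Ioi 0) x := fun x hx =>
    ((Real.hasDerivAt_rpow_const (Or.inl (ne_of_gt hx))).hasDerivWithinAt).hasFDerivWithinAt
  have hinj : InjOn (fun t : ℝ => t ^ q) (Ioi 0) :=
    StrictMonoOn.injOn fun x hx y _ hxy => Real.rpow_lt_rpow (le_of_lt hx) hxy hq
  have key := lintegral_image_eq_lintegral_abs_det_fderiv_mul volume
    measurableSet_Ioi hderiv hinj h
  rw [himg] at key
  rw [key]
  refine setLIntegral_congr_fun measurableSet_Ioi (fun x hx => ?_)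
  have hx0 : (0:ℝ) < x := hx
  rw [ContinuousLinearMap.det_smulRight, ContinuousLinearMap.one_apply, one_mul, abs_of_nonneg (by positivity)]

/-- Changing the dimension of the Hausdorff content under the Choquet integral. -/
theorem stmt_3 (n : ℕ) (hn : 1 ≤ n) (δ₁ δ₂ : ℝ) (h1 : 0 < δ₁) (h12 : δ₁ < δ₂)
    (h2 : δ₂ ≤ n) (f : EuclideanSpace ℝ (Fin n) → ℝ≥0∞) :
    (choquetIntegral n δ₂ f) ^ (1 / δ₂)
      ≤ ENNReal.ofReal ((δ₂ / δ₁) ^ (1 / δ₂)) *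
        (choquetIntegral n δ₁ (fun x => f x ^ (δ₁ / δ₂))) ^ (1 / δ₁) := by
  have h2pos : 0 < δ₂ := h1.trans h12
  set p := δ₂ / δ₁ with hp_def
  set q := δ₁ / δ₂ with hq_def
  have hq0 : 0 < q := div_pos h1 h2pos
  have hp1 : 1 < p := (one_lt_div h1).2 h12
  have hp0 : 0 < p := lt_trans one_pos hp1
  set g : EuclideanSpace ℝ (Fin n) → ℝ≥0∞ := fun x => f x ^ q with hg
  set A := choquetIntegral n δ₁ g with hA
  suffices hmain : choquetIntegral n δ₂ f ≤ ENNReal.ofReal p * A ^ p by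
    calc (choquetIntegral n δ₂ f) ^ (1 / δ₂)
        ≤ (ENNReal.ofReal p * A ^ p) ^ (1 / δ₂) :=
          ENNReal.rpow_le_rpow hmain (by positivity)
      _ = ENNReal.ofReal p ^ (1 / δ₂) * (A ^ p) ^ (1 / δ₂) :=
          ENNReal.mul_rpow_of_nonneg _ _ (by positivity)
      _ = ENNReal.ofReal (p ^ (1 / δ₂)) * A ^ (1 / δ₁) := by
          rw [ENNReal.ofReal_rpow_of_pos hp0, ← ENNReal.rpow_mul,
            show p * (1 / δ₂) = 1 / δ₁ by rw [hp_def]; field_simp]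
  -- trivial when A = ∞
  rcases eq_or_ne A ∞ with hAtop | hAtop
  · rw [hAtop, ENNReal.top_rpow_of_pos hp0, ENNReal.mul_top (by simpa using hp0)]
    exact le_top
  -- layer function for g at level s
  set h : ℝ → ℝ≥0∞ := fun s => hausdorffContent n δ₁ {x | ENNReal.ofReal s < g x} with hh
  have hsub : ∫⁻ t in Ioi (0:ℝ), ENNReal.ofReal (q * t ^ (q - 1)) * h (t ^ q) = A :=
    lintegral_comp_rpow_Ioi h hq0
  have hq_ne : ENNReal.ofReal q ≠ 0 := by simpa using hq0
  have hq_fin : ENNReal.ofReal q ≠ ∞ := ENNReal.ofReal_ne_top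
  -- pointwise bound
  have hpt : ∀ t : ℝ, 0 < t →
      hausdorffContent n δ₂ {x | ENNReal.ofReal t < f x}
        ≤ (A ^ (p - 1) * (ENNReal.ofReal q)⁻¹) *
          (ENNReal.ofReal (q * t ^ (q - 1)) * h (t ^ q)) := by
    intro t ht
    have hset : {x | ENNReal.ofReal t < f x} = {x | ENNReal.ofReal (t ^ q) < g x} := by
      ext x
      simp only [mem_setOf_eq, hg]
      rw [← ENNReal.ofReal_rpow_of_pos ht]
      exact (ENNReal.rpow_lt_rpow_iff hq0).symm
    have hcheb : h (t ^ q) ≤ A / ENNReal.ofReal (t ^ q) :=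
      hausdorffContent_chebyshev g (Real.rpow_pos_of_pos ht q)
    have htq : 0 < t ^ q := Real.rpow_pos_of_pos ht q
    have hfin : h (t ^ q) ≠ ∞ := by
      intro hcon
      rw [hcon] at hcheb
      have : A = ∞ := by
        have := top_le_iff.1 hcheb
        rw [ENNReal.div_eq_top] at this
        rcases this with ⟨_, h0⟩ | ⟨ha, _⟩
        · exact absurd h0 (by simpa using htq)
        · exact ha
      exact hAtop this
    have step1 : hausdorffContent n δ₂ {x | ENNReal.ofReal t < f x} ≤ h (t ^ q) ^ p := by
      rw [hset]
      exact hausdorffContent_le_rpow h1 h12.le _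
    rcases eq_or_ne (h (t ^ q)) 0 with hz | hz
    · rw [hz, ENNReal.zero_rpow_of_pos hp0] at step1
      exact step1.trans zero_le
    refine step1.trans ?_
    have split : h (t ^ q) ^ p = h (t ^ q) * h (t ^ q) ^ (p - 1) := by
      nth_rewrite 2 [← ENNReal.rpow_one (h (t ^ q))]
      rw [← ENNReal.rpow_add _ _ hz hfin]
      norm_num
    rw [split]
    have bound2 : h (t ^ q) ^ (p - 1) ≤ (A / ENNReal.ofReal (t ^ q)) ^ (p - 1) :=
      ENNReal.rpow_le_rpow hcheb (by linarith)
    have e1 : (ENNReal.ofReal (t ^ q))⁻¹ ^ (p - 1) = ENNReal.ofReal (t ^ (q - 1)) := by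
      rw [← ENNReal.ofReal_inv_of_pos htq, ← Real.rpow_neg ht.le,
        ENNReal.ofReal_rpow_of_pos (Real.rpow_pos_of_pos ht _), ← Real.rpow_mul ht.le]
      congr 2
      rw [hp_def, hq_def]
      field_simp
      ring
    have e2 : ENNReal.ofReal (q * t ^ (q - 1))
        = ENNReal.ofReal q * ENNReal.ofReal (t ^ (q - 1)) :=
      ENNReal.ofReal_mul hq0.le
    calc h (t ^ q) * h (t ^ q) ^ (p - 1)
        ≤ h (t ^ q) * (A / ENNReal.ofReal (t ^ q)) ^ (p - 1) :=
          mul_le_mul_right bound2 _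
      _ = h (t ^ q) * (A ^ (p - 1) * (ENNReal.ofReal (t ^ q))⁻¹ ^ (p - 1)) := by
          rw [ENNReal.div_rpow_of_nonneg _ _ (by linarith : (0:ℝ) ≤ p - 1),
            div_eq_mul_inv, ← ENNReal.inv_rpow]
      _ = (A ^ (p - 1) * (ENNReal.ofReal q)⁻¹) *
          (ENNReal.ofReal (q * t ^ (q - 1)) * h (t ^ q)) := by
          rw [e1, e2,
            show (A ^ (p - 1) * (ENNReal.ofReal q)⁻¹) *
                ((ENNReal.ofReal q * ENNReal.ofReal (t ^ (q - 1))) * h (t ^ q))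
              = (A ^ (p - 1) * ENNReal.ofReal (t ^ (q - 1)) * h (t ^ q)) *
                ((ENNReal.ofReal q)⁻¹ * ENNReal.ofReal q) by ring,
            ENNReal.inv_mul_cancel hq_ne hq_fin, mul_one]
          ring
  -- integrate
  have hconst_fin : A ^ (p - 1) * (ENNReal.ofReal q)⁻¹ ≠ ∞ :=
    ENNReal.mul_ne_top (ENNReal.rpow_ne_top_of_nonneg (by linarith) hAtop)
      (ENNReal.inv_ne_top.2 hq_ne)
  calc choquetIntegral n δ₂ f
      ≤ ∫⁻ t in Ioi (0:ℝ), (A ^ (p - 1) * (ENNReal.ofReal q)⁻¹) *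
          (ENNReal.ofReal (q * t ^ (q - 1)) * h (t ^ q)) := by
        refine lintegral_mono_ae ?_
        filter_upwards [ae_restrict_mem measurableSet_Ioi] with t ht
        exact hpt t ht
    _ = (A ^ (p - 1) * (ENNReal.ofReal q)⁻¹) *
          ∫⁻ t in Ioi (0:ℝ), ENNReal.ofReal (q * t ^ (q - 1)) * h (t ^ q) :=
        lintegral_const_mul' _ _ hconst_fin
    _ = (A ^ (p - 1) * (ENNReal.ofReal q)⁻¹) * A := by rw [hsub]
    _ = ENNReal.ofReal p * (A ^ (p - 1) * A) := by
        rw [← ENNReal.ofReal_inv_of_pos hq0, show q⁻¹ = p by rw [hq_def, hp_def, inv_div]]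
        ring
    _ ≤ ENNReal.ofReal p * A ^ p := by
        rcases eq_or_ne A 0 with hA0 | hA0
        · simp [hA0, ENNReal.zero_rpow_of_pos hp0, ENNReal.zero_rpow_of_pos
            (by linarith : (0:ℝ) < p - 1)]
        · refine le_of_eq ?_
          congr 1
          nth_rewrite 2 [← ENNReal.rpow_one A]
          rw [← ENNReal.rpow_add _ _ hA0 hAtop]
          norm_num
end

section
/- Let κ ∈ [0, 1] and α > 2 − κ. Then there is no constant c > 0 such that ( ∫_{ℝ²} u^α dH^{2−κ}_∞ )^{1/α} ≤ c ∫_{ℝ²} |∇u| dx holds for all nonnegative Lipschitz continuous functions u : ℝ² → ℝ with compact support. In other words, the exponent (n−κ)/(n−1) in the Choquet–Sobolev inequality is the best possible for n = 2. -/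
open scoped ENNReal NNReal
open Metric Set Filter MeasureTheory

lemma aux_content_lb {δ r : ℝ} (hδ1 : 1 ≤ δ) (hδ2 : δ ≤ 2) (hr : 0 < r)
    {E : Set (EuclideanSpace ℝ (Fin 2))}
    (hE : Metric.ball (0 : EuclideanSpace ℝ (Fin 2)) r ⊆ E) :
    ENNReal.ofReal (r ^ δ) ≤ hausdorffContent 2 δ E := by
  refine le_iInf fun c => le_iInf fun hpos => le_iInf fun hcov => ?_
  have hcov' : Metric.ball (0 : EuclideanSpace ℝ (Fin 2)) r ⊆
      ⋃ i, Metric.ball (c i).1 (c i).2 := hE.trans hcov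
  have hdim : Module.finrank ℝ (EuclideanSpace ℝ (Fin 2)) = 2 := finrank_euclideanSpace_fin
  set V : ℝ≥0∞ := volume (Metric.ball (0 : EuclideanSpace ℝ (Fin 2)) 1) with hV
  have hV0 : V ≠ 0 := (measure_ball_pos _ _ one_pos).ne'
  have hVt : V ≠ ⊤ := measure_ball_lt_top.ne
  have key : ENNReal.ofReal (r ^ (2:ℕ)) ≤ ∑' i, ENNReal.ofReal ((c i).2 ^ (2:ℕ)) := by
    have h1 : ENNReal.ofReal (r ^ (2:ℕ)) * V ≤ (∑' i, ENNReal.ofReal ((c i).2 ^ (2:ℕ))) * V := by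
      rw [← ENNReal.tsum_mul_right]
      calc ENNReal.ofReal (r ^ (2:ℕ)) * V
          = volume (Metric.ball (0 : EuclideanSpace ℝ (Fin 2)) r) := by
            rw [Measure.addHaar_ball volume _ hr.le, hdim]
        _ ≤ volume (⋃ i, Metric.ball (c i).1 (c i).2) := measure_mono hcov'
        _ ≤ ∑' i, volume (Metric.ball (c i).1 (c i).2) := measure_iUnion_le _
        _ = ∑' i, ENNReal.ofReal ((c i).2 ^ (2:ℕ)) * V := by
            refine tsum_congr fun i => ?_
            rw [Measure.addHaar_ball volume _ (hpos i).le, hdim]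
    exact (ENNReal.mul_le_mul_iff_left hV0 hVt).mp h1
  by_cases hcase : ∃ i, r ≤ (c i).2
  · obtain ⟨i, hi⟩ := hcase
    calc ENNReal.ofReal (r ^ δ) ≤ ENNReal.ofReal ((c i).2 ^ δ) :=
          ENNReal.ofReal_le_ofReal (Real.rpow_le_rpow hr.le hi (by linarith))
      _ ≤ _ := ENNReal.le_tsum i
  · push_neg at hcase
    have hterm : ∀ i, r ^ (δ - 2) * (c i).2 ^ (2:ℕ) ≤ (c i).2 ^ δ := by
      intro i
      have h1 : (c i).2 ^ δ = (c i).2 ^ (δ - 2) * (c i).2 ^ (2:ℕ) := by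
        rw [← Real.rpow_natCast ((c i).2) 2, ← Real.rpow_add (hpos i)]
        norm_num
      rw [h1]
      exact mul_le_mul_of_nonneg_right
        (Real.rpow_le_rpow_of_nonpos (hpos i) (hcase i).le (by linarith)) (by positivity)
    calc ENNReal.ofReal (r ^ δ)
        = ENNReal.ofReal (r ^ (δ - 2) * r ^ (2:ℕ)) := by
          rw [← Real.rpow_natCast r 2, ← Real.rpow_add hr]; norm_num
      _ = ENNReal.ofReal (r ^ (δ - 2)) * ENNReal.ofReal (r ^ (2:ℕ)) :=
          ENNReal.ofReal_mul (by positivity)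
      _ ≤ ENNReal.ofReal (r ^ (δ - 2)) * ∑' i, ENNReal.ofReal ((c i).2 ^ (2:ℕ)) :=
          mul_le_mul_right key _
      _ = ∑' i, ENNReal.ofReal (r ^ (δ - 2)) * ENNReal.ofReal ((c i).2 ^ (2:ℕ)) :=
          ENNReal.tsum_mul_left.symm
      _ ≤ ∑' i, ENNReal.ofReal ((c i).2 ^ δ) := by
          refine ENNReal.tsum_le_tsum fun i => ?_
          rw [← ENNReal.ofReal_mul (by positivity)]
          exact ENNReal.ofReal_le_ofReal (hterm i)

/-- Sharpness of the exponent $(n-κ)/(n-1)$ in the Choquet–Sobolev inequality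
in dimension $n = 2$. -/
theorem stmt_6 (κ α : ℝ) (hκ0 : 0 ≤ κ) (hκ1 : κ ≤ 1) (hα : 2 - κ < α) :
    ¬ ∃ c : ℝ, 0 < c ∧ ∀ u : EuclideanSpace ℝ (Fin 2) → ℝ,
      (∀ x, 0 ≤ u x) → (∃ K : ℝ≥0, LipschitzWith K u) → HasCompactSupport u →
      (choquetIntegral 2 (2 - κ) (fun x => ENNReal.ofReal (u x ^ α))) ^ (1 / α)
        ≤ ENNReal.ofReal c * ∫⁻ x, ENNReal.ofReal ‖fderiv ℝ u x‖ := by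
  rintro ⟨c, hc, H⟩
  have hα0 : 0 < α := by linarith
  set δ : ℝ := 2 - κ with hδdef
  have hδ1 : (1:ℝ) ≤ δ := by rw [hδdef]; linarith
  have hδ2 : δ ≤ 2 := by rw [hδdef]; linarith
  have hδα : δ < α := hα
  set v : ℝ := (volume (Metric.closedBall (0 : EuclideanSpace ℝ (Fin 2)) 1)).toReal with hv
  have hv0 : 0 < v := ENNReal.toReal_pos (measure_closedBall_pos _ _ one_pos).ne'
    measure_closedBall_lt_top.ne
  set A : ℝ := ((1/2:ℝ) ^ δ * 2 ^ (-α)) ^ (1/α) with hA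
  have hA0 : 0 < A := by positivity
  set β : ℝ := 1 - δ/α with hβdef
  have hβ : 0 < β := by
    have h1 : δ/α < 1 := (div_lt_one hα0).mpr hδα
    rw [hβdef]; linarith
  set lam : ℝ := min 1 ((A/(c*v)) ^ (1/β) / 2) with hlamdef
  have hlam0 : 0 < lam := lt_min one_pos (by positivity)
  set u : EuclideanSpace ℝ (Fin 2) → ℝ := fun x => max (1 - ‖x‖/lam) 0 with hu
  -- Lipschitz
  have hlip : LipschitzWith (⟨1/lam, by positivity⟩ : ℝ≥0) u := by
    apply LipschitzWith.of_dist_le_mul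
    intro x y
    have h1 : dist (u x) (u y) = |max (1 - ‖x‖/lam) 0 - max (1 - ‖y‖/lam) 0| :=
      Real.dist_eq _ _
    rw [h1]
    refine (abs_max_sub_max_le_abs _ _ _).trans ?_
    have h2 : (1 - ‖x‖/lam) - (1 - ‖y‖/lam) = (‖y‖ - ‖x‖)/lam := by ring
    rw [h2, abs_div, abs_of_pos hlam0]
    have h3 : |‖y‖ - ‖x‖| ≤ dist x y := by
      rw [dist_eq_norm, ← norm_sub_rev]
      exact abs_norm_sub_norm_le y x
    show |‖y‖ - ‖x‖| / lam ≤ (1/lam) * dist x y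
    rw [one_div, inv_mul_eq_div]
    gcongr
  -- compact support
  have hsupp : HasCompactSupport u := by
    apply HasCompactSupport.intro
      (isCompact_closedBall (0 : EuclideanSpace ℝ (Fin 2)) lam)
    intro x hx
    have hx' : lam < ‖x‖ := by simpa [Metric.mem_closedBall, dist_zero_right, not_le] using hx
    have h5 : 1 < ‖x‖/lam := (one_lt_div hlam0).mpr hx'
    exact max_eq_right (by linarith)
  have hineq := H u (fun x => le_max_right _ _) ⟨_, hlip⟩ hsupp
  -- lower bound for choquet integral
  have hsuper : ∀ t ∈ Ioo (0:ℝ) (2 ^ (-α)), ENNReal.ofReal ((lam/2) ^ δ) ≤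
      hausdorffContent 2 δ {x | ENNReal.ofReal t < ENNReal.ofReal (u x ^ α)} := by
    intro t ht
    refine aux_content_lb hδ1 hδ2 (by positivity) ?_
    intro x hx
    rw [mem_ball_zero_iff] at hx
    have hhalf : (1/2:ℝ) ≤ u x := by
      have h6 : ‖x‖/lam < 1/2 := (div_lt_iff₀ hlam0).mpr (by rw [one_div, inv_mul_eq_div]; linarith)
      exact le_trans (by linarith) (le_max_left _ _)
    have hup : (0:ℝ) < u x := lt_of_lt_of_le (by norm_num) hhalf
    have h2 : (2:ℝ) ^ (-α) ≤ u x ^ α := by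
      have h3 : (1/2:ℝ) ^ α ≤ u x ^ α := Real.rpow_le_rpow (by norm_num) hhalf hα0.le
      calc (2:ℝ)^(-α) = (1/2)^α := by
            rw [one_div, Real.inv_rpow (by norm_num), ← Real.rpow_neg (by norm_num)]
        _ ≤ _ := h3
    show ENNReal.ofReal t < ENNReal.ofReal (u x ^ α)
    exact (ENNReal.ofReal_lt_ofReal_iff (lt_of_lt_of_le (by positivity) h2)).mpr
      (lt_of_lt_of_le ht.2 h2)
  have hLHS : ENNReal.ofReal ((lam/2) ^ δ * 2 ^ (-α)) ≤
      choquetIntegral 2 δ (fun x => ENNReal.ofReal (u x ^ α)) := by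
    rw [choquetIntegral]
    calc ENNReal.ofReal ((lam/2) ^ δ * 2 ^ (-α))
        = ENNReal.ofReal ((lam/2) ^ δ) * volume (Ioo (0:ℝ) (2 ^ (-α))) := by
          rw [Real.volume_Ioo, sub_zero, ENNReal.ofReal_mul (by positivity)]
      _ = ∫⁻ _ in Ioo (0:ℝ) (2 ^ (-α)), ENNReal.ofReal ((lam/2) ^ δ) :=
          (setLIntegral_const _ _).symm
      _ ≤ ∫⁻ t in Ioo (0:ℝ) (2 ^ (-α)),
            hausdorffContent 2 δ {x | ENNReal.ofReal t < ENNReal.ofReal (u x ^ α)} :=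
          setLIntegral_mono' measurableSet_Ioo hsuper
      _ ≤ _ := lintegral_mono_set Ioo_subset_Ioi_self
  -- upper bound for gradient integral
  have hK : ∀ x, ENNReal.ofReal ‖fderiv ℝ u x‖ ≤
      (Metric.closedBall (0 : EuclideanSpace ℝ (Fin 2)) lam).indicator
        (fun _ => ENNReal.ofReal (1/lam)) x := by
    intro x
    by_cases hx : x ∈ Metric.closedBall (0 : EuclideanSpace ℝ (Fin 2)) lam
    · rw [indicator_of_mem hx]
      exact ENNReal.ofReal_le_ofReal (norm_fderiv_le_of_lipschitz ℝ hlip)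
    · rw [indicator_of_notMem hx]
      have hx' : lam < ‖x‖ := by simpa [Metric.mem_closedBall, dist_zero_right, not_le] using hx
      have hzero : u =ᶠ[nhds x] (fun _ => (0:ℝ)) := by
        refine Filter.eventuallyEq_iff_exists_mem.mpr
          ⟨Metric.ball x (‖x‖ - lam), Metric.ball_mem_nhds x (by linarith), ?_⟩
        intro y hy
        rw [Metric.mem_ball] at hy
        have h7 : ‖x - y‖ < ‖x‖ - lam := by rwa [← dist_eq_norm, dist_comm]
        have h8 : ‖x‖ - ‖y‖ ≤ ‖x - y‖ := (abs_le.mp (abs_norm_sub_norm_le x y)).2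
        have h9 : lam < ‖y‖ := by linarith
        have h10 : 1 < ‖y‖/lam := (one_lt_div hlam0).mpr h9
        show u y = 0
        exact max_eq_right (by linarith)
      rw [hzero.fderiv_eq, fderiv_fun_const]
      simp
  have hRHS : (∫⁻ x, ENNReal.ofReal ‖fderiv ℝ u x‖) ≤
      ENNReal.ofReal (1/lam * (lam^(2:ℕ) * v)) := by
    calc ∫⁻ x, ENNReal.ofReal ‖fderiv ℝ u x‖
        ≤ ∫⁻ x, (Metric.closedBall (0 : EuclideanSpace ℝ (Fin 2)) lam).indicator
            (fun _ => ENNReal.ofReal (1/lam)) x := lintegral_mono hK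
      _ = ENNReal.ofReal (1/lam) * volume (Metric.closedBall (0 : EuclideanSpace ℝ (Fin 2)) lam) := by
          rw [lintegral_indicator measurableSet_closedBall, setLIntegral_const]
      _ = ENNReal.ofReal (1/lam) * (ENNReal.ofReal (lam ^ (2:ℕ)) * ENNReal.ofReal v) := by
          rw [Measure.addHaar_closedBall' volume _ hlam0.le, finrank_euclideanSpace_fin,
            hv, ENNReal.ofReal_toReal measure_closedBall_lt_top.ne]
      _ = ENNReal.ofReal (1/lam * (lam^(2:ℕ) * v)) := by
          rw [ENNReal.ofReal_mul (by positivity), ENNReal.ofReal_mul (by positivity)]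
  -- key real identity
  have hX : ((lam/2) ^ δ * 2 ^ (-α)) ^ (1/α) = A * lam ^ (δ/α) := by
    rw [hA, div_eq_mul_one_div lam 2, Real.mul_rpow hlam0.le (by norm_num), mul_assoc,
      Real.mul_rpow (by positivity) (by positivity), ← Real.rpow_mul hlam0.le,
      mul_one_div, mul_comm]
  -- combine
  have hmain : ENNReal.ofReal (A * lam ^ (δ/α)) ≤
      ENNReal.ofReal (c * (1/lam * (lam^(2:ℕ) * v))) := by
    calc ENNReal.ofReal (A * lam ^ (δ/α))
        = ENNReal.ofReal ((lam/2) ^ δ * 2 ^ (-α)) ^ (1/α) := by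
          rw [ENNReal.ofReal_rpow_of_pos (by positivity), hX]
      _ ≤ (choquetIntegral 2 δ (fun x => ENNReal.ofReal (u x ^ α))) ^ (1/α) :=
          ENNReal.rpow_le_rpow hLHS (by positivity)
      _ ≤ ENNReal.ofReal c * ∫⁻ x, ENNReal.ofReal ‖fderiv ℝ u x‖ := hineq
      _ ≤ ENNReal.ofReal c * ENNReal.ofReal (1/lam * (lam^(2:ℕ) * v)) :=
          mul_le_mul_right hRHS _
      _ = ENNReal.ofReal (c * (1/lam * (lam^(2:ℕ) * v))) := (ENNReal.ofReal_mul hc.le).symm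
  have hreal : A * lam ^ (δ/α) ≤ c * (1/lam * (lam^(2:ℕ) * v)) :=
    (ENNReal.ofReal_le_ofReal_iff (by positivity)).mp hmain
  have hsimp : 1/lam * (lam^(2:ℕ) * v) = lam * v := by
    field_simp
  rw [hsimp] at hreal
  -- final contradiction
  have hlt : lam ^ β < A / (c*v) := by
    have h2 : lam < (A/(c*v)) ^ (1/β) := by
      have h3 : (0:ℝ) < (A/(c*v)) ^ (1/β) := by positivity
      calc lam ≤ (A/(c*v)) ^ (1/β) / 2 := min_le_right _ _
        _ < (A/(c*v)) ^ (1/β) := by linarith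
    calc lam ^ β < ((A/(c*v)) ^ (1/β)) ^ β := Real.rpow_lt_rpow hlam0.le h2 hβ
      _ = A/(c*v) := by
        rw [← Real.rpow_mul (by positivity), one_div_mul_cancel hβ.ne', Real.rpow_one]
  have hsplit : lam = lam ^ (δ/α) * lam ^ β := by
    conv_lhs => rw [← Real.rpow_one lam]
    rw [show (1:ℝ) = δ/α + β by rw [hβdef]; ring, Real.rpow_add hlam0]
  have hfin : c * (lam * v) < A * lam ^ (δ/α) := by
    have h11 : lam ^ β * (c*v) < A := (lt_div_iff₀ (by positivity)).mp hlt
    have h12 : c * (lam * v) = lam ^ β * (c*v) * lam ^ (δ/α) := by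
      conv_lhs => rw [hsplit]
      ring
    rw [h12]
    exact mul_lt_mul_of_pos_right h11 (Real.rpow_pos_of_pos hlam0 _)
  linarith
end

section
/- Let n ≥ 2 and κ ∈ [0, 1]. There exists a constant c = c(n) > 0 such that for every Lebesgue measurable function u : ℝⁿ → [−∞, ∞], ( ∫_{ℝⁿ} |u|^{n/(n−1)} dx )^{(n−1)/n} ≤ c ( ∫_{ℝⁿ} |u|^{(n−κ)/(n−1)} dH^{n−κ}_∞ )^{(n−1)/(n−κ)}; that is, the Choquet–Sobolev norm on the right-hand side dominates the classical Lebesgue L^{n/(n−1)} norm. -/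
open scoped ENNReal NNReal
open Metric Set Filter MeasureTheory

private lemma hc_mono (n : ℕ) (δ : ℝ) {E F : Set (EuclideanSpace ℝ (Fin n))}
    (h : E ⊆ F) : hausdorffContent n δ E ≤ hausdorffContent n δ F := by
  refine le_iInf fun c => le_iInf fun hpos => le_iInf fun hcov => ?_
  exact iInf_le_of_le c (iInf_le_of_le hpos (iInf_le_of_le (h.trans hcov) le_rfl))

private lemma tsum_rpow_le (a : ℕ → ℝ≥0∞) {q : ℝ} (hq : 1 ≤ q) :
    ∑' i, a i ^ q ≤ (∑' i, a i) ^ q := by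
  by_cases hS : (∑' i, a i) = ∞
  · rw [hS, ENNReal.top_rpow_of_pos (by linarith)]; exact le_top
  have hq1 : (0:ℝ) ≤ q - 1 := by linarith
  calc ∑' i, a i ^ q ≤ ∑' i, (∑' j, a j) ^ (q - 1) * a i := by
        refine ENNReal.tsum_le_tsum fun i => ?_
        have h1 : a i ^ q = a i ^ (q - 1) * a i ^ (1 : ℝ) := by
          rw [← ENNReal.rpow_add_of_nonneg _ _ hq1 zero_le_one]; norm_num
        rw [h1, ENNReal.rpow_one]
        exact mul_le_mul_left (ENNReal.rpow_le_rpow (ENNReal.le_tsum i) hq1) _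
    _ = (∑' j, a j) ^ (q - 1) * ∑' i, a i := ENNReal.tsum_mul_left
    _ = (∑' i, a i) ^ q := by
        nth_rewrite 2 [← ENNReal.rpow_one (∑' i, a i)]
        rw [← ENNReal.rpow_add_of_nonneg _ _ hq1 zero_le_one]
        norm_num

private lemma measurable_ereal_abs : Measurable EReal.abs :=
  EReal.measurable_of_measurable_real (measurable_abs.ennreal_ofReal)

private lemma vol_le_content (n : ℕ) (hn : 2 ≤ n) {δ : ℝ} (hδ1 : 1 ≤ δ) (hδn : δ ≤ (n:ℝ))
    (E : Set (EuclideanSpace ℝ (Fin n))) :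
    volume E ≤ ENNReal.ofReal (Real.sqrt Real.pi ^ n / Real.Gamma ((n:ℝ) / 2 + 1)) *
      hausdorffContent n δ E ^ ((n : ℝ) / δ) := by
  haveI : Nonempty (Fin n) := ⟨⟨0, by omega⟩⟩
  set V : ℝ≥0∞ := ENNReal.ofReal (Real.sqrt Real.pi ^ n / Real.Gamma ((n:ℝ) / 2 + 1)) with hV
  have hδ0 : (0:ℝ) < δ := by linarith
  have hn0 : (0:ℝ) < (n:ℝ) := by
    have : (2:ℝ) ≤ (n:ℝ) := by exact_mod_cast hn
    linarith
  have hVr : 0 < Real.sqrt Real.pi ^ n / Real.Gamma ((n:ℝ) / 2 + 1) :=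
    div_pos (pow_pos (Real.sqrt_pos.2 Real.pi_pos) n)
      (Real.Gamma_pos_of_pos (by positivity))
  have hV0 : V ≠ 0 := by
    rw [hV, Ne, ENNReal.ofReal_eq_zero, not_le]
    exact hVr
  have hVtop : V ≠ ∞ := ENNReal.ofReal_ne_top
  set q : ℝ := (n:ℝ) / δ with hq
  have hq1 : 1 ≤ q := (one_le_div hδ0).2 hδn
  have hq0 : 0 < q := lt_of_lt_of_le one_pos hq1
  set e : ℝ := δ / (n:ℝ) with he
  have he0 : 0 ≤ e := by positivity
  have heq : e * q = 1 := by rw [he, hq]; field_simp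
  -- per-cover bound
  have key : ∀ (c : ℕ → EuclideanSpace ℝ (Fin n) × ℝ), (∀ i, 0 < (c i).2) →
      E ⊆ ⋃ i, Metric.ball (c i).1 (c i).2 →
      volume E ≤ V * (∑' i, ENNReal.ofReal ((c i).2 ^ δ)) ^ q := by
    intro c hpos hcov
    have hball : ∀ i, volume (Metric.ball (c i).1 (c i).2)
        = (ENNReal.ofReal ((c i).2 ^ δ)) ^ q * V := by
      intro i
      have hrs : ((c i).2 ^ δ) ^ q = (c i).2 ^ (n:ℕ) := by
        rw [← Real.rpow_natCast (c i).2 n, ← Real.rpow_mul (hpos i).le]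
        congr 1
        rw [hq]; field_simp
      have hpow : (ENNReal.ofReal (c i).2) ^ (n:ℕ) = ENNReal.ofReal ((c i).2 ^ δ) ^ q := by
        rw [ENNReal.ofReal_rpow_of_pos (Real.rpow_pos_of_pos (hpos i) δ), hrs,
          ENNReal.ofReal_pow (hpos i).le]
      rw [EuclideanSpace.volume_ball, Fintype.card_fin, hpow, hV]
    calc volume E ≤ volume (⋃ i, Metric.ball (c i).1 (c i).2) := measure_mono hcov
      _ ≤ ∑' i, volume (Metric.ball (c i).1 (c i).2) := measure_iUnion_le _
      _ = ∑' i, (ENNReal.ofReal ((c i).2 ^ δ)) ^ q * V := by simp_rw [hball]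
      _ = (∑' i, (ENNReal.ofReal ((c i).2 ^ δ)) ^ q) * V := ENNReal.tsum_mul_right
      _ ≤ (∑' i, ENNReal.ofReal ((c i).2 ^ δ)) ^ q * V :=
          mul_le_mul_left (tsum_rpow_le _ hq1) _
      _ = V * (∑' i, ENNReal.ofReal ((c i).2 ^ δ)) ^ q := mul_comm _ _
  have hVe0 : V ^ e ≠ 0 := (ENNReal.rpow_pos (pos_iff_ne_zero.2 hV0) hVtop).ne'
  have hVetop : V ^ e ≠ ∞ := ENNReal.rpow_ne_top_of_nonneg he0 hVtop
  have h2 : volume E ^ e / V ^ e ≤ hausdorffContent n δ E := by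
    refine le_iInf fun c => le_iInf fun hpos => le_iInf fun hcov => ?_
    rw [ENNReal.div_le_iff_le_mul (Or.inl hVe0) (Or.inl hVetop)]
    calc volume E ^ e ≤ (V * (∑' i, ENNReal.ofReal ((c i).2 ^ δ)) ^ q) ^ e :=
          ENNReal.rpow_le_rpow (key c hpos hcov) he0
      _ = V ^ e * ((∑' i, ENNReal.ofReal ((c i).2 ^ δ)) ^ q) ^ e :=
          ENNReal.mul_rpow_of_nonneg _ _ he0
      _ = V ^ e * (∑' i, ENNReal.ofReal ((c i).2 ^ δ)) ^ (q * e) := by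
          rw [← ENNReal.rpow_mul]
      _ = (∑' i, ENNReal.ofReal ((c i).2 ^ δ)) * V ^ e := by
          rw [mul_comm q e, heq, ENNReal.rpow_one, mul_comm]
  have h3 : volume E ^ e ≤ hausdorffContent n δ E * V ^ e := by
    rw [← ENNReal.div_le_iff_le_mul (Or.inl hVe0) (Or.inl hVetop)]
    exact h2
  calc volume E = (volume E ^ e) ^ q := by
        rw [← ENNReal.rpow_mul, heq, ENNReal.rpow_one]
    _ ≤ (hausdorffContent n δ E * V ^ e) ^ q := ENNReal.rpow_le_rpow h3 hq0.le
    _ = hausdorffContent n δ E ^ q * (V ^ e) ^ q := ENNReal.mul_rpow_of_nonneg _ _ hq0.le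
    _ = hausdorffContent n δ E ^ q * V := by rw [← ENNReal.rpow_mul, heq, ENNReal.rpow_one]
    _ = V * hausdorffContent n δ E ^ ((n:ℝ)/δ) := mul_comm _ _

/-- The Choquet–Sobolev norm dominates the classical $L^{n/(n-1)}$ norm. -/
theorem stmt_8 (n : ℕ) (hn : 2 ≤ n) (κ : ℝ) (hκ0 : 0 ≤ κ) (hκ1 : κ ≤ 1) :
    ∃ c : ℝ, 0 < c ∧ ∀ u : EuclideanSpace ℝ (Fin n) → EReal, Measurable u →
      (∫⁻ x, (u x).abs ^ ((n : ℝ) / ((n : ℝ) - 1))) ^ (((n : ℝ) - 1) / n)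
        ≤ ENNReal.ofReal c *
          (choquetIntegral n ((n : ℝ) - κ)
            (fun x => (u x).abs ^ (((n : ℝ) - κ) / ((n : ℝ) - 1))))
            ^ (((n : ℝ) - 1) / ((n : ℝ) - κ)) := by
  have hn2 : (2:ℝ) ≤ (n:ℝ) := by exact_mod_cast hn
  have hn1 : (1:ℝ) ≤ (n:ℝ) - 1 := by linarith
  have hn0 : (0:ℝ) < (n:ℝ) := by linarith
  set δ : ℝ := (n:ℝ) - κ with hδdef
  have hδ1 : 1 ≤ δ := by rw [hδdef]; linarith
  have hδn : δ ≤ (n:ℝ) := by rw [hδdef]; linarith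
  have hδ0 : (0:ℝ) < δ := by linarith
  set q : ℝ := (n:ℝ) / δ with hqdef
  have hq1 : 1 ≤ q := (one_le_div hδ0).2 hδn
  have hq0 : (0:ℝ) < q := lt_of_lt_of_le one_pos hq1
  set V : ℝ≥0∞ := ENNReal.ofReal (Real.sqrt Real.pi ^ n / Real.Gamma ((n:ℝ) / 2 + 1)) with hVdef
  have hVr : 0 < Real.sqrt Real.pi ^ n / Real.Gamma ((n:ℝ) / 2 + 1) :=
    div_pos (pow_pos (Real.sqrt_pos.2 Real.pi_pos) n)
      (Real.Gamma_pos_of_pos (by positivity))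
  have hVtop : V ≠ ∞ := ENNReal.ofReal_ne_top
  have hVt0 : 0 < V.toReal := by
    rw [hVdef, ENNReal.toReal_ofReal hVr.le]; exact hVr
  have he0 : (0:ℝ) ≤ ((n:ℝ) - 1) / (n:ℝ) := by positivity
  refine ⟨(q * V.toReal) ^ (((n:ℝ) - 1) / (n:ℝ)) + 1, by positivity, fun u hu => ?_⟩
  set f : EuclideanSpace ℝ (Fin n) → ℝ≥0∞ := fun x => (u x).abs ^ (δ / ((n:ℝ) - 1)) with hfdef
  have hf_meas : Measurable f :=
    ENNReal.continuous_rpow_const.measurable.comp (measurable_ereal_abs.comp hu)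
  set A : ℝ≥0∞ := choquetIntegral n δ f with hAdef
  set H : ℝ → ℝ≥0∞ := fun t => hausdorffContent n δ {x | ENNReal.ofReal t < f x} with hHdef
  have hArfl : A = ∫⁻ t in Set.Ioi (0:ℝ), H t := rfl
  have hHmono : ∀ {s t : ℝ}, s ≤ t → H t ≤ H s := fun hst =>
    hc_mono _ _ (fun x hx => lt_of_le_of_lt (ENNReal.ofReal_le_ofReal hst) hx)
  -- key pointwise bound: t * H t ≤ A
  have key_t : ∀ t : ℝ, 0 < t → ENNReal.ofReal t * H t ≤ A := by
    intro t ht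
    calc ENNReal.ofReal t * H t = ∫⁻ _ in Set.Ioc (0:ℝ) t, H t := by
          rw [setLIntegral_const, Real.volume_Ioc, mul_comm]
          norm_num
      _ ≤ ∫⁻ s in Set.Ioc (0:ℝ) t, H s :=
          lintegral_mono_ae ((ae_restrict_iff' measurableSet_Ioc).2
            (ae_of_all _ fun s hs => hHmono hs.2))
      _ ≤ ∫⁻ s in Set.Ioi (0:ℝ), H s :=
          lintegral_mono' (Measure.restrict_mono Set.Ioc_subset_Ioi_self le_rfl) le_rfl
      _ = A := hArfl.symm
  by_cases hA : A = ∞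
  · rw [hA, ENNReal.top_rpow_of_pos (by positivity : (0:ℝ) < ((n:ℝ) - 1) / δ)]
    rw [ENNReal.mul_top (by simp [ENNReal.ofReal_eq_zero, not_le]; positivity)]
    exact le_top
  -- A finite: the exceptional set has measure zero
  have hEinf : volume {x | f x = ∞} = 0 := by
    by_contra hvol
    have hHE : hausdorffContent n δ {x | f x = ∞} ≠ 0 := by
      intro h0
      apply hvol
      have hb := vol_le_content n hn hδ1 hδn {x | f x = ∞}
      rw [h0, ENNReal.zero_rpow_of_pos (by positivity), mul_zero] at hb
      exact le_antisymm hb bot_le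
    have htop : (⊤:ℝ≥0∞) ≤ A := by
      calc (⊤:ℝ≥0∞) = hausdorffContent n δ {x | f x = ∞} * volume (Set.Ioi (0:ℝ)) := by
            rw [Real.volume_Ioi, ENNReal.mul_top hHE]
        _ = ∫⁻ _ in Set.Ioi (0:ℝ), hausdorffContent n δ {x | f x = ∞} :=
            (setLIntegral_const _ _).symm
        _ ≤ ∫⁻ t in Set.Ioi (0:ℝ), H t := by
            refine lintegral_mono fun t => hc_mono _ _ fun x hx => ?_
            simp only [Set.mem_setOf_eq] at hx ⊢
            rw [hx]
            exact ENNReal.ofReal_lt_top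
        _ = A := hArfl.symm
    exact hA (top_le_iff.1 htop)
  have hae : ∀ᵐ x, f x ≠ ∞ := by
    rw [MeasureTheory.ae_iff]
    simpa using hEinf
  set F : EuclideanSpace ℝ (Fin n) → ℝ := fun x => (f x).toReal with hFdef
  -- Step 1: rewrite the integrand
  have step1 : ∫⁻ x, (u x).abs ^ ((n:ℝ) / ((n:ℝ) - 1)) = ∫⁻ x, ENNReal.ofReal (F x ^ q) := by
    refine lintegral_congr_ae (hae.mono fun x hx => ?_)
    have h1 : (u x).abs ^ ((n:ℝ) / ((n:ℝ) - 1)) = f x ^ q := by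
      simp only [hfdef]
      rw [← ENNReal.rpow_mul]
      congr 1
      rw [hqdef]
      field_simp
    simp only [hFdef]
    rw [h1, ← ENNReal.ofReal_rpow_of_nonneg ENNReal.toReal_nonneg hq0.le,
      ENNReal.ofReal_toReal hx]
  -- Step 2: layer cake formula
  have hF_meas : AEMeasurable F volume := (hf_meas.ennreal_toReal).aemeasurable
  have lc := MeasureTheory.lintegral_rpow_eq_lintegral_meas_lt_mul volume
    (ae_of_all _ fun x => ENNReal.toReal_nonneg (a := f x)) hF_meas hq0
  -- Step 3: pointwise bound on the distribution integrand
  have hbound : ∀ t ∈ Set.Ioi (0:ℝ),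
      volume {a | t < F a} * ENNReal.ofReal (t ^ (q - 1)) ≤ (V * A ^ (q - 1)) * H t := by
    intro t ht
    rw [Set.mem_Ioi] at ht
    have hset : volume {a | t < F a} = volume {x | ENNReal.ofReal t < f x} := by
      refine measure_congr ?_
      rw [Filter.eventuallyEq_set]
      filter_upwards [hae] with x hx
      simp only [Set.mem_setOf_eq, hFdef]
      exact (ENNReal.ofReal_lt_iff_lt_toReal ht.le hx).symm
    have h1 : volume {x | ENNReal.ofReal t < f x} ≤ V * (H t) ^ q :=
      vol_le_content n hn hδ1 hδn _
    have hot0 : ENNReal.ofReal t ≠ 0 := by simp [ENNReal.ofReal_eq_zero, not_le, ht]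
    have h2 : H t ≤ A / ENNReal.ofReal t := by
      rw [ENNReal.le_div_iff_mul_le (Or.inl hot0) (Or.inl ENNReal.ofReal_ne_top)]
      rw [mul_comm]
      exact key_t t ht
    have hq10 : (0:ℝ) ≤ q - 1 := by linarith
    have hpow0 : (ENNReal.ofReal t) ^ (q - 1) ≠ 0 :=
      (ENNReal.rpow_pos (ENNReal.ofReal_pos.2 ht) ENNReal.ofReal_ne_top).ne'
    have hpowtop : (ENNReal.ofReal t) ^ (q - 1) ≠ ∞ :=
      ENNReal.rpow_ne_top_of_nonneg hq10 ENNReal.ofReal_ne_top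
    calc volume {a | t < F a} * ENNReal.ofReal (t ^ (q - 1))
        = volume {x | ENNReal.ofReal t < f x} * ENNReal.ofReal (t ^ (q - 1)) := by rw [hset]
      _ ≤ (V * (H t) ^ q) * ENNReal.ofReal (t ^ (q - 1)) := mul_le_mul_left h1 _
      _ = V * ((H t) ^ (q - 1) * ENNReal.ofReal (t ^ (q - 1)) * H t) := by
          have hq' : (H t) ^ q = (H t) ^ (q - 1) * H t := by
            nth_rewrite 3 [← ENNReal.rpow_one (H t)]
            rw [← ENNReal.rpow_add_of_nonneg _ _ hq10 zero_le_one]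
            norm_num
          rw [hq']; ring
      _ ≤ V * ((A / ENNReal.ofReal t) ^ (q - 1) * ENNReal.ofReal (t ^ (q - 1)) * H t) := by
          gcongr
      _ = V * (A ^ (q - 1) / (ENNReal.ofReal t) ^ (q - 1)
            * (ENNReal.ofReal t) ^ (q - 1) * H t) := by
          rw [ENNReal.div_rpow_of_nonneg _ _ hq10, ← ENNReal.ofReal_rpow_of_pos ht]
      _ = V * (A ^ (q - 1) * H t) := by rw [ENNReal.div_mul_cancel hpow0 hpowtop]
      _ = (V * A ^ (q - 1)) * H t := by ring
  -- Step 4: integrate the bound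
  have hAq1top : V * A ^ (q - 1) ≠ ∞ :=
    ENNReal.mul_ne_top hVtop (ENNReal.rpow_ne_top_of_nonneg (by linarith) hA)
  have hint : ∫⁻ t in Set.Ioi (0:ℝ), volume {a | t < F a} * ENNReal.ofReal (t ^ (q - 1))
      ≤ V * A ^ q := by
    calc ∫⁻ t in Set.Ioi (0:ℝ), volume {a | t < F a} * ENNReal.ofReal (t ^ (q - 1))
        ≤ ∫⁻ t in Set.Ioi (0:ℝ), (V * A ^ (q - 1)) * H t :=
          lintegral_mono_ae ((ae_restrict_iff' measurableSet_Ioi).2 (ae_of_all _ hbound))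
      _ = (V * A ^ (q - 1)) * ∫⁻ t in Set.Ioi (0:ℝ), H t := lintegral_const_mul' _ _ hAq1top
      _ = V * (A ^ (q - 1) * A) := by rw [← hArfl, mul_assoc]
      _ = V * A ^ q := by
          congr 1
          nth_rewrite 2 [← ENNReal.rpow_one A]
          rw [← ENNReal.rpow_add_of_nonneg _ _ (by linarith) zero_le_one]
          norm_num
  have main : ∫⁻ x, (u x).abs ^ ((n:ℝ) / ((n:ℝ) - 1)) ≤ ENNReal.ofReal q * (V * A ^ q) := by
    rw [step1, lc]
    exact mul_le_mul_right hint _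
  -- Conclude
  have hqe : q * (((n:ℝ) - 1) / (n:ℝ)) = ((n:ℝ) - 1) / δ := by
    rw [hqdef]; field_simp
  calc (∫⁻ x, (u x).abs ^ ((n:ℝ) / ((n:ℝ) - 1))) ^ (((n:ℝ) - 1) / (n:ℝ))
      ≤ (ENNReal.ofReal q * (V * A ^ q)) ^ (((n:ℝ) - 1) / (n:ℝ)) :=
        ENNReal.rpow_le_rpow main he0
    _ = (ENNReal.ofReal q * V) ^ (((n:ℝ) - 1) / (n:ℝ)) * A ^ (q * (((n:ℝ) - 1) / (n:ℝ))) := by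
        rw [← mul_assoc, ENNReal.mul_rpow_of_nonneg _ _ he0, ← ENNReal.rpow_mul]
    _ ≤ ENNReal.ofReal ((q * V.toReal) ^ (((n:ℝ) - 1) / (n:ℝ)) + 1)
          * A ^ (((n:ℝ) - 1) / δ) := by
        rw [hqe]
        refine mul_le_mul_left ?_ _
        have hmul : ENNReal.ofReal q * V = ENNReal.ofReal (q * V.toReal) := by
          rw [ENNReal.ofReal_mul hq0.le, ENNReal.ofReal_toReal hVtop]
        rw [hmul, ENNReal.ofReal_rpow_of_nonneg (by positivity) he0]
        exact ENNReal.ofReal_le_ofReal (le_add_of_nonneg_right zero_le_one)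
end

section
/- Let F : [0, ∞] → [0, ∞] be a left-continuous and non-decreasing function, and set s := sup{ t ∈ [0, ∞] : F(t) < F(∞) }. If s > 0, then for every ε > 0 there exists a strictly increasing sequence t₀ < t₁ < t₂ < … of elements of [0, s) with t₀ = 0 and lim_{i→∞} t_i = s, such that for every i = 1, 2, … and every t ∈ (t_{i−1}, t_i], one has F(t_i) ≤ F(t) + ε. -/
open scoped ENNReal NNReal
open Metric Set Filter MeasureTheory

/-- A "good pair" for the staircase lemma. -/
def SGood (F : ℝ≥0∞ → ℝ≥0∞) (ε a b : ℝ≥0∞) : Prop :=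
  a < b ∧ ∀ x ∈ Set.Ioc a b, F b ≤ F x + ε

lemma mem_nhds_le_add (c ε : ℝ≥0∞) (hc : c ≠ ⊤) (hε : 0 < ε) :
    {y : ℝ≥0∞ | c ≤ y + ε} ∈ nhds c := by
  rcases le_or_gt c ε with h | h
  · exact Filter.univ_mem' fun y => h.trans le_add_self
  · have hsub : c - ε < c :=
      ENNReal.sub_lt_self hc (zero_le.trans_lt h).ne' hε.ne'
    exact Filter.mem_of_superset (Ioi_mem_nhds hsub)
      fun y (hy : c - ε < y) => (tsub_le_iff_right.mp (le_of_lt hy) : c ≤ y + ε)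

lemma reach (F : ℝ≥0∞ → ℝ≥0∞) (hmono : Monotone F)
    (hleft : ∀ t : ℝ≥0∞, 0 < t → Tendsto F (nhdsWithin t (Set.Iio t)) (nhds (F t)))
    (ε : ℝ≥0∞) (hε : 0 < ε) (a b : ℝ≥0∞) (hab : a ≤ b) (hFb : F b ≠ ⊤) :
    Relation.ReflTransGen (SGood F ε) a b := by
  set A : Set ℝ≥0∞ := {x | x ∈ Set.Icc a b ∧ Relation.ReflTransGen (SGood F ε) a x} with hA
  have haA : a ∈ A := ⟨⟨le_refl a, hab⟩, Relation.ReflTransGen.refl⟩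
  have hmb : sSup A ≤ b := sSup_le fun x hx => hx.1.2
  have ham : a ≤ sSup A := le_sSup haA
  have hmA : Relation.ReflTransGen (SGood F ε) a (sSup A) := by
    rcases eq_or_lt_of_le ham with h | h
    · rw [← h]
    · have hm0 : (0 : ℝ≥0∞) < sSup A := lt_of_le_of_lt zero_le h
      have hFm : F (sSup A) ≠ ⊤ := by
        intro hh
        exact hFb (top_le_iff.mp (hh ▸ hmono hmb))
      have hev : ∀ᶠ r in nhdsWithin (sSup A) (Set.Iio (sSup A)), F (sSup A) ≤ F r + ε :=
        (hleft _ hm0).eventually (mem_nhds_le_add _ _ hFm hε)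
      obtain ⟨l, hl, hsub⟩ := (mem_nhdsLT_iff_exists_Ioo_subset' hm0).mp hev
      obtain ⟨x, hxA, hlx⟩ := lt_sSup_iff.mp (show l < sSup A from hl)
      have hxm : x ≤ sSup A := le_sSup hxA
      rcases eq_or_lt_of_le hxm with h2 | h2
      · rw [← h2]; exact hxA.2
      · refine hxA.2.tail ⟨h2, fun y hy => ?_⟩
        rcases eq_or_lt_of_le hy.2 with h3 | h3
        · rw [h3]; exact le_self_add
        · exact hsub ⟨lt_trans hlx hy.1, h3⟩
  have hmbeq : sSup A = b := by
    by_contra hne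
    have hmb' : sSup A < b := lt_of_le_of_ne hmb hne
    have key : ∃ q ∈ Set.Ioc (sSup A) b, SGood F ε (sSup A) q := by
      rcases eq_or_ne ε ⊤ with hεt | hεt
      · exact ⟨b, ⟨hmb', le_rfl⟩, hmb', fun y _ => by simp [hεt]⟩
      · have hIb : (⨅ y ∈ Set.Ioc (sSup A) b, F y) ≤ F b :=
          iInf₂_le b ⟨hmb', le_rfl⟩
        have hIlt : (⨅ y ∈ Set.Ioc (sSup A) b, F y) < (⨅ y ∈ Set.Ioc (sSup A) b, F y) + ε :=
          ENNReal.lt_add_right (lt_of_le_of_lt hIb (lt_top_iff_ne_top.mpr hFb)).ne hε.ne'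
        have hex : ∃ q ∈ Set.Ioc (sSup A) b, F q < (⨅ y ∈ Set.Ioc (sSup A) b, F y) + ε := by
          by_contra hcon
          push_neg at hcon
          exact absurd (le_iInf₂ hcon) (not_le.mpr hIlt)
        obtain ⟨q, hq, hFq⟩ := hex
        refine ⟨q, hq, hq.1, fun y hy => ?_⟩
        have hIy : (⨅ y ∈ Set.Ioc (sSup A) b, F y) ≤ F y :=
          iInf₂_le y ⟨hy.1, le_trans hy.2 hq.2⟩
        exact le_trans hFq.le (add_le_add_left hIy ε)
    obtain ⟨q, hq, hgood⟩ := key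
    have hqA : q ∈ A := ⟨⟨le_trans ham hq.1.le, hq.2⟩, hmA.tail hgood⟩
    exact absurd (le_sSup hqA) (not_le.mpr hq.1)
  exact hmbeq ▸ hmA

lemma chainify {α : Type*} {r : α → α → Prop} {a b : α}
    (h : Relation.ReflTransGen r a b) :
    ∃ k, ∃ c : ℕ → α, c 0 = a ∧ c k = b ∧ ∀ j < k, r (c j) (c (j + 1)) := by
  induction h with
  | refl => exact ⟨0, fun _ => a, rfl, rfl, by omega⟩
  | @tail b' c' hab' hr ih =>
    obtain ⟨k, c, h0, hk, hg⟩ := ih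
    refine ⟨k + 1, fun j => if j ≤ k then c j else c', ?_, ?_, ?_⟩
    · simpa using h0
    · simp
    · intro j hj
      rcases Nat.lt_succ_iff_lt_or_eq.mp hj with h1 | h1
      · simpa [Nat.le_of_lt h1, Nat.succ_le_of_lt h1] using hg j h1
      · subst h1
        simp [hk, hr]

/-- The bookkeeping function for concatenating chains of lengths `k i`. -/
def concatT (k : ℕ → ℕ) : ℕ → ℕ × ℕ
  | 0 => (0, 0)
  | n + 1 =>
      if (concatT k n).2 + 1 < k (concatT k n).1 then
        ((concatT k n).1, (concatT k n).2 + 1)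
      else ((concatT k n).1 + 1, 0)

lemma concatT_snd_lt (k : ℕ → ℕ) (hk : ∀ i, 0 < k i) (n : ℕ) :
    (concatT k n).2 < k (concatT k n).1 := by
  induction n with
  | zero => exact hk 0
  | succ n ih =>
    rw [concatT]
    by_cases h : (concatT k n).2 + 1 < k (concatT k n).1
    · rw [if_pos h]; exact h
    · rw [if_neg h]; exact hk _

lemma concatT_exists (k : ℕ → ℕ) (hk : ∀ i, 0 < k i) (i : ℕ) :
    ∃ n, concatT k n = (i, 0) := by
  induction i with
  | zero => exact ⟨0, rfl⟩
  | succ i ih =>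
    obtain ⟨n, hn⟩ := ih
    have key : ∀ j, j < k i → concatT k (n + j) = (i, j) := by
      intro j
      induction j with
      | zero => intro _; simpa using hn
      | succ j ihj =>
        intro hj
        have hj' : j < k i := by omega
        show concatT k ((n + j) + 1) = (i, j + 1)
        rw [concatT, ihj hj']
        simp [hj]
    refine ⟨n + k i, ?_⟩
    have h1 : concatT k (n + (k i - 1)) = (i, k i - 1) := key _ (by have := hk i; omega)
    have h2 : n + k i = (n + (k i - 1)) + 1 := by have := hk i; omega
    rw [h2, concatT, h1]
    simp [show ¬ (k i - 1 + 1 < k i) by omega]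

/-- The staircase lemma for left-continuous non-decreasing functions on $[0,∞]$. -/
theorem stmt_10 (F : ℝ≥0∞ → ℝ≥0∞) (hmono : Monotone F)
    (hleft : ∀ t : ℝ≥0∞, 0 < t → Tendsto F (nhdsWithin t (Set.Iio t)) (nhds (F t)))
    (s : ℝ≥0∞) (hs : s = sSup {t | F t < F ⊤}) (hs0 : 0 < s) :
    ∀ ε : ℝ≥0∞, 0 < ε → ∃ t : ℕ → ℝ≥0∞, t 0 = 0 ∧ StrictMono t ∧
      (∀ i, t i < s) ∧ Tendsto t atTop (nhds s) ∧
      ∀ i : ℕ, ∀ x ∈ Set.Ioc (t i) (t (i + 1)), F (t (i + 1)) ≤ F x + ε := by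
  intro ε hε
  have hFlt : ∀ t, t < s → F t ≠ ⊤ := by
    intro t ht hFt
    rw [hs] at ht
    obtain ⟨w, hw, htw⟩ := lt_sSup_iff.mp ht
    have h1 : F t ≤ F w := hmono htw.le
    rw [hFt] at h1
    exact not_top_lt (lt_of_le_of_lt h1 hw)
  obtain ⟨u, hu_mono, hu_mem, hu_tend⟩ := exists_seq_strictMono_tendsto' hs0
  set v : ℕ → ℝ≥0∞ := fun n => Nat.casesOn n 0 u with hv
  have hv_lt : ∀ n, v n < s := by
    intro n
    cases n with
    | zero => exact hs0
    | succ m => exact (hu_mem m).2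
  have hv_mono : StrictMono v := by
    apply strictMono_nat_of_lt_succ
    intro n
    cases n with
    | zero => exact (hu_mem 0).1
    | succ m => exact hu_mono (Nat.lt_succ_self m)
  have H : ∀ i, ∃ kk, ∃ c : ℕ → ℝ≥0∞, c 0 = v i ∧ c kk = v (i + 1) ∧
      ∀ j < kk, SGood F ε (c j) (c (j + 1)) :=
    fun i => chainify (reach F hmono hleft ε hε _ _
      (hv_mono (Nat.lt_succ_self i)).le (hFlt _ (hv_lt (i + 1))))
  choose k c hc0 hck hcg using H
  have hk_pos : ∀ i, 0 < k i := by
    intro i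
    rcases Nat.eq_zero_or_pos (k i) with h | h
    · exfalso
      have h2 := hck i
      rw [h, hc0 i] at h2
      exact (hv_mono (Nat.lt_succ_self i)).ne h2
    · exact h
  have hc_mono : ∀ i j1 j2, j1 < j2 → j2 ≤ k i → c i j1 < c i j2 := by
    intro i j1 j2 h12 h2k
    induction j2 with
    | zero => omega
    | succ n ih =>
      rcases Nat.lt_succ_iff_lt_or_eq.mp h12 with h | h
      · exact lt_trans (ih h (by omega)) (hcg i n (by omega)).1
      · exact h ▸ (hcg i n (by omega)).1
  set t : ℕ → ℝ≥0∞ := fun n => c (concatT k n).1 (concatT k n).2 with ht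
  have hstep : ∀ n, SGood F ε (t n) (t (n + 1)) := by
    intro n
    have hinv := concatT_snd_lt k hk_pos n
    show SGood F ε (c (concatT k n).1 (concatT k n).2)
      (c (concatT k (n + 1)).1 (concatT k (n + 1)).2)
    rw [concatT]
    by_cases h : (concatT k n).2 + 1 < k (concatT k n).1
    · rw [if_pos h]
      exact hcg _ _ hinv
    · rw [if_neg h]
      have heq : c ((concatT k n).1 + 1) 0 = c (concatT k n).1 ((concatT k n).2 + 1) := by
        have hj1 : (concatT k n).2 + 1 = k (concatT k n).1 := by omega
        rw [hc0, hj1, hck]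
      show SGood F ε _ (c ((concatT k n).1 + 1) 0)
      rw [heq]
      exact hcg _ _ hinv
  have ht_mono : StrictMono t := strictMono_nat_of_lt_succ fun n => (hstep n).1
  have ht_lt : ∀ n, t n < s := by
    intro n
    have h1 : t n < c (concatT k n).1 (k (concatT k n).1) :=
      hc_mono _ _ _ (concatT_snd_lt k hk_pos n) le_rfl
    rw [hck] at h1
    exact lt_trans h1 (hv_lt ((concatT k n).1 + 1))
  refine ⟨t, ?_, ht_mono, ht_lt, ?_, fun i x hx => (hstep i).2 x hx⟩
  · show c (concatT k 0).1 (concatT k 0).2 = 0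
    rw [show concatT k 0 = (0, 0) from rfl]
    exact hc0 0
  · rw [tendsto_order]
    constructor
    · intro l hl
      have hev : ∀ᶠ i in atTop, l < u i := hu_tend.eventually (eventually_gt_nhds hl)
      obtain ⟨i, hi⟩ := hev.exists
      obtain ⟨n₀, hn₀⟩ := concatT_exists k hk_pos (i + 1)
      refine eventually_atTop.mpr ⟨n₀, fun n hn => ?_⟩
      have h1 : t n₀ = v (i + 1) := by
        show c (concatT k n₀).1 (concatT k n₀).2 = v (i + 1)
        rw [hn₀]
        exact hc0 (i + 1)
      have h2 : v (i + 1) = u i := rfl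
      calc l < u i := hi
        _ = t n₀ := by rw [h1, h2]
        _ ≤ t n := ht_mono.monotone hn
    · intro w hw
      exact Filter.Eventually.of_forall fun n => lt_trans (ht_lt n) hw
end

section
/- For every n ≥ 1 there exists a constant c(n) > 0 such that for every δ ∈ (0, n] and every sequence (f_i)_{i=1}^∞ of functions f_i : ℝⁿ → [0, ∞], ∫_{ℝⁿ} (liminf_{i→∞} f_i) dH^δ_∞ ≤ c(n) · liminf_{i→∞} ∫_{ℝⁿ} f_i dH^δ_∞ (a Fatou-type lemma for the Choquet integral with respect to Hausdorff content). -/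
open scoped ENNReal NNReal
open Metric Set Filter MeasureTheory

namespace HCF

abbrev Pt (n : ℕ) := EuclideanSpace ℝ (Fin n)
abbrev Idx (n : ℕ) := ℤ × (Fin n → ℤ)

/-- The dyadic cube of scale `q.1` and position `q.2`. -/
def dcube (n : ℕ) (q : Idx n) : Set (Pt n) := {x | ∀ i, ⌊x i / (2:ℝ) ^ q.1⌋ = q.2 i}

noncomputable def dcap (n : ℕ) (δ : ℝ) (q : Idx n) : ℝ≥0∞ :=
  ENNReal.ofReal (((2:ℝ) ^ q.1) ^ δ)

noncomputable def dcost (n : ℕ) (δ : ℝ) (S : Set (Idx n)) : ℝ≥0∞ := ∑' q : S, dcap n δ q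

noncomputable def dcont (n : ℕ) (δ : ℝ) (E : Set (Pt n)) : ℝ≥0∞ :=
  ⨅ (S : Set (Idx n)) (_ : E ⊆ ⋃ q ∈ S, dcube n q), dcost n δ S

lemma two_zpow_pos {k : ℤ} : (0:ℝ) < 2 ^ k := zpow_pos (by norm_num) k

/-- 1-dimensional nesting: the floor datum at a finer scale determines that at a
coarser scale. -/
lemma floor_nest {k k' : ℤ} (hk : k ≤ k') {m m' : ℤ} {x y : ℝ}
    (hx : ⌊x / (2:ℝ) ^ k⌋ = m) (hx' : ⌊x / (2:ℝ) ^ k'⌋ = m')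
    (hy : ⌊y / (2:ℝ) ^ k⌋ = m) : ⌊y / (2:ℝ) ^ k'⌋ = m' := by
  set e : ℕ := (k' - k).toNat with he
  have hke : (2:ℝ) ^ k' = 2 ^ k * 2 ^ e := by
    rw [← zpow_natCast (2:ℝ) e, he, Int.toNat_of_nonneg (by omega), ← zpow_add₀ (by norm_num : (2:ℝ) ≠ 0)]
    ring_nf
  have hepos : (0:ℝ) < 2 ^ e := by positivity
  have hx1 : ((m':ℝ)) ≤ x / 2 ^ k' := (Int.le_floor.mp hx'.ge).trans_eq rfl
  have hx2 : x / (2:ℝ) ^ k' < m' + 1 := by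
    have := Int.lt_floor_add_one (x / (2:ℝ) ^ k'); rw [hx'] at this; exact_mod_cast this
  -- rewrite x / 2^k = (x / 2^k') * 2^e
  have hxk : x / (2:ℝ) ^ k = (x / 2 ^ k') * 2 ^ e := by
    rw [hke]; field_simp
  have hyk : y / (2:ℝ) ^ k' = (y / 2 ^ k) / 2 ^ e := by
    rw [hke]; rw [div_div]
  -- integer inequalities
  have hint1 : (m' * (2:ℤ) ^ e : ℤ) ≤ m := by
    rw [← hx]
    apply Int.le_floor.mpr
    rw [hxk]
    push_cast
    calc ((m':ℝ)) * 2 ^ e ≤ (x / 2 ^ k') * 2 ^ e := by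
          apply mul_le_mul_of_nonneg_right hx1 hepos.le
      _ = _ := rfl
  have hint2 : m + 1 ≤ (m' + 1) * (2:ℤ) ^ e := by
    have : m < (m' + 1) * (2:ℤ) ^ e := by
      rw [← hx]
      apply Int.floor_lt.mpr
      rw [hxk]
      push_cast
      apply mul_lt_mul_of_pos_right hx2 hepos
    omega
  -- conclude for y
  have hy1 : ((m:ℝ)) ≤ y / 2 ^ k := Int.le_floor.mp hy.ge
  have hy2 : y / (2:ℝ) ^ k < m + 1 := by
    have := Int.lt_floor_add_one (y / (2:ℝ) ^ k); rw [hy] at this; exact_mod_cast this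
  apply Int.floor_eq_iff.mpr
  constructor
  · rw [hyk, le_div_iff₀ hepos]
    calc ((m':ℝ)) * 2 ^ e = ((m' * (2:ℤ) ^ e : ℤ) : ℝ) := by push_cast; ring
      _ ≤ (m : ℝ) := by exact_mod_cast hint1
      _ ≤ y / 2 ^ k := hy1
  · rw [hyk, div_lt_iff₀ hepos]
    calc y / 2 ^ k < (m:ℝ) + 1 := hy2
      _ ≤ ((m' + 1) * (2:ℤ) ^ e : ℤ) := by exact_mod_cast hint2
      _ = ((m':ℝ) + 1) * 2 ^ e := by push_cast; ring

-- PART 2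

lemma dcube_nest {n : ℕ} {q r : Idx n} (hk : q.1 ≤ r.1) {x : Pt n}
    (hq : x ∈ dcube n q) (hr : x ∈ dcube n r) : dcube n q ⊆ dcube n r :=
  fun y hy i => floor_nest hk (hq i) (hr i) (hy i)

lemma dcube_comparable {n : ℕ} {q r : Idx n} {x : Pt n}
    (hq : x ∈ dcube n q) (hr : x ∈ dcube n r) :
    dcube n q ⊆ dcube n r ∨ dcube n r ⊆ dcube n q := by
  rcases le_total q.1 r.1 with h | h
  · exact Or.inl (dcube_nest h hq hr)
  · exact Or.inr (dcube_nest h hr hq)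

/-- The corner of a dyadic cube. -/
noncomputable def corner (n : ℕ) (q : Idx n) : Pt n := WithLp.toLp 2 (fun i => (q.2 i : ℝ) * 2 ^ q.1)

lemma corner_mem {n : ℕ} (q : Idx n) : corner n q ∈ dcube n q := by
  intro i
  show ⌊((q.2 i : ℝ) * 2 ^ q.1) / 2 ^ q.1⌋ = q.2 i
  rw [mul_div_assoc, div_self (ne_of_gt two_zpow_pos), mul_one, Int.floor_intCast]

lemma scale_le_of_subset {n : ℕ} (hn : 0 < n) {q r : Idx n}
    (h : dcube n q ⊆ dcube n r) : q.1 ≤ r.1 := by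
  by_contra hlt
  push_neg at hlt
  set i0 : Fin n := ⟨0, hn⟩
  set x := corner n q with hxdef
  have hxq : x ∈ dcube n q := corner_mem q
  set y : Pt n := WithLp.toLp 2 (Function.update x i0 (x i0 + 2 ^ r.1)) with hydef
  have hyq : y ∈ dcube n q := by
    intro i
    by_cases hi : i = i0
    · subst hi
      have : y i0 = x i0 + 2 ^ r.1 := Function.update_self i0 (x i0 + 2 ^ r.1) x.ofLp
      rw [this]
      have hxi : x i0 = (q.2 i0 : ℝ) * 2 ^ q.1 := rfl
      rw [hxi]
      have hsmall : (0:ℝ) < 2 ^ r.1 / 2 ^ q.1 ∧ (2:ℝ) ^ r.1 / 2 ^ q.1 < 1 := by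
        constructor
        · positivity
        · rw [div_lt_one two_zpow_pos]
          exact zpow_lt_zpow_iff_right₀ (by norm_num) |>.mpr hlt
      have : ((q.2 i0 : ℝ) * 2 ^ q.1 + 2 ^ r.1) / 2 ^ q.1
           = (q.2 i0 : ℝ) + 2 ^ r.1 / 2 ^ q.1 := by
        field_simp
      rw [this]
      rw [Int.floor_eq_iff]
      constructor
      · linarith [hsmall.1]
      · push_cast; linarith [hsmall.2]
    · have : y i = x i := Function.update_of_ne hi _ _
      rw [this]; exact hxq i
  have hxr : x ∈ dcube n r := h hxq
  have hyr : y ∈ dcube n r := h hyq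
  -- contradiction at coordinate i0, scale r.1
  have hxint : x i0 / (2:ℝ) ^ r.1 = ((q.2 i0 * 2 ^ (q.1 - r.1).toNat : ℤ) : ℝ) := by
    have hke : (2:ℝ) ^ q.1 = 2 ^ r.1 * 2 ^ (q.1 - r.1).toNat := by
      rw [← zpow_natCast (2:ℝ), Int.toNat_of_nonneg (by omega),
        ← zpow_add₀ (by norm_num : (2:ℝ) ≠ 0)]
      ring_nf
    have hxi : x i0 = (q.2 i0 : ℝ) * 2 ^ q.1 := rfl
    rw [hxi, hke]
    push_cast
    field_simp
  have h1 : ⌊x i0 / (2:ℝ) ^ r.1⌋ = q.2 i0 * 2 ^ (q.1 - r.1).toNat := by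
    rw [hxint, Int.floor_intCast]
  have h2 : ⌊y i0 / (2:ℝ) ^ r.1⌋ = q.2 i0 * 2 ^ (q.1 - r.1).toNat + 1 := by
    have hyi : y i0 = x i0 + 2 ^ r.1 := Function.update_self i0 (x i0 + 2 ^ r.1) x.ofLp
    rw [hyi, add_div, div_self (ne_of_gt two_zpow_pos), hxint]
    rw [show ((q.2 i0 * 2 ^ (q.1 - r.1).toNat : ℤ) : ℝ) + 1
        = ((q.2 i0 * 2 ^ (q.1 - r.1).toNat + 1 : ℤ) : ℝ) by push_cast; ring, Int.floor_intCast]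
  have e1 := hxr i0
  have e2 := hyr i0
  rw [h1] at e1
  rw [h2] at e2
  omega

lemma idx_eq_of_subset_scale_eq {n : ℕ} {q r : Idx n} (hk : q.1 = r.1)
    (h : dcube n q ⊆ dcube n r) : q = r := by
  have hc := h (corner_mem q)
  have : q.2 = r.2 := by
    funext i
    have := hc i
    rw [← hk] at this
    rw [← this, (corner_mem q) i]
  exact Prod.ext hk this

lemma idx_eq_of_subset_subset {n : ℕ} (hn : 0 < n) {q r : Idx n}
    (h1 : dcube n q ⊆ dcube n r) (h2 : dcube n r ⊆ dcube n q) : q = r :=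
  idx_eq_of_subset_scale_eq (le_antisymm (scale_le_of_subset hn h1) (scale_le_of_subset hn h2)) h1

/-- In a family of cubes with bounded scales, above every cube there is a maximal one. -/
lemma exists_maximal_above {n : ℕ} (hn : 0 < n) {S : Set (Idx n)} {K : ℤ}
    (hK : ∀ q ∈ S, q.1 ≤ K) :
    ∀ q ∈ S, ∃ r ∈ S, dcube n q ⊆ dcube n r ∧
      (∀ t ∈ S, dcube n r ⊆ dcube n t → r = t) := by
  suffices H : ∀ (d : ℕ) (q), q ∈ S → (K - q.1).toNat ≤ d → ∃ r ∈ S, dcube n q ⊆ dcube n r ∧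
      (∀ t ∈ S, dcube n r ⊆ dcube n t → r = t) by
    intro q hq; exact H (K - q.1).toNat q hq le_rfl
  intro d
  induction d with
  | zero =>
    intro q hq hd
    refine ⟨q, hq, subset_rfl, ?_⟩
    intro t ht hsub
    have h1 : q.1 ≤ t.1 := scale_le_of_subset hn hsub
    have h2 : t.1 ≤ K := hK t ht
    have h3 : K ≤ q.1 := by omega
    exact idx_eq_of_subset_scale_eq (by omega) hsub
  | succ d ih =>
    intro q hq hd
    by_cases hmax : ∀ t ∈ S, dcube n q ⊆ dcube n t → q = t
    · exact ⟨q, hq, subset_rfl, hmax⟩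
    · push_neg at hmax
      obtain ⟨t, ht, hsub, hne⟩ := hmax
      have hlt : q.1 < t.1 := by
        rcases lt_or_eq_of_le (scale_le_of_subset hn hsub) with h | h
        · exact h
        · exact absurd (idx_eq_of_subset_scale_eq h hsub) hne
      obtain ⟨r, hr, hsub', hrmax⟩ := ih t ht (by have := hK t ht; omega)
      exact ⟨r, hr, hsub.trans hsub', hrmax⟩
-- PART 3 : cost lemmas, scale bounds, maxl

section costs

variable {n : ℕ} {δ : ℝ}

lemma dcap_pos (hδ : 0 < δ) (q : Idx n) : 0 < dcap n δ q := by
  unfold dcap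
  apply ENNReal.ofReal_pos.mpr
  exact Real.rpow_pos_of_pos two_zpow_pos δ

lemma dcost_eq_tsum_indicator (S : Set (Idx n)) :
    dcost n δ S = ∑' q : Idx n, S.indicator (dcap n δ) q := tsum_subtype S (dcap n δ)

lemma dcost_mono {S T : Set (Idx n)} (h : S ⊆ T) : dcost n δ S ≤ dcost n δ T := by
  rw [dcost_eq_tsum_indicator, dcost_eq_tsum_indicator]
  exact Summable.tsum_le_tsum (fun q => Set.indicator_le_indicator_of_subset h (fun _ => zero_le) q)
    ENNReal.summable ENNReal.summable

lemma dcost_union_le (S T : Set (Idx n)) :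
    dcost n δ (S ∪ T) ≤ dcost n δ S + dcost n δ T := by
  rw [dcost_eq_tsum_indicator (S ∪ T), dcost_eq_tsum_indicator S, dcost_eq_tsum_indicator T,
    ← ENNReal.tsum_add]
  apply Summable.tsum_le_tsum _ ENNReal.summable ENNReal.summable
  intro q
  by_cases hS : q ∈ S <;> by_cases hT : q ∈ T <;>
    simp [Set.indicator_apply, hS, hT]

lemma dcost_union_inter (S T : Set (Idx n)) :
    dcost n δ (S ∪ T) + dcost n δ (S ∩ T) = dcost n δ S + dcost n δ T := by
  rw [dcost_eq_tsum_indicator (S ∪ T), dcost_eq_tsum_indicator (S ∩ T),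
    dcost_eq_tsum_indicator S, dcost_eq_tsum_indicator T, ← ENNReal.tsum_add, ← ENNReal.tsum_add]
  congr 1
  funext q
  by_cases hS : q ∈ S <;> by_cases hT : q ∈ T <;>
    simp [Set.indicator_apply, hS, hT]

lemma dcost_diff_add (S T : Set (Idx n)) (h : T ⊆ S) :
    dcost n δ T + dcost n δ (S \ T) = dcost n δ S := by
  have hd : Disjoint T (S \ T) := Set.disjoint_sdiff_right.mono_left le_rfl
  calc dcost n δ T + dcost n δ (S \ T)
      = dcost n δ (T ∪ (S \ T)) :=
        (Summable.tsum_union_disjoint (f := dcap n δ) hd ENNReal.summable ENNReal.summable).symm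
    _ = dcost n δ S := by rw [Set.union_diff_cancel h]

lemma dcap_le_dcost {S : Set (Idx n)} {q : Idx n} (hq : q ∈ S) : dcap n δ q ≤ dcost n δ S :=
  ENNReal.le_tsum (⟨q, hq⟩ : S)

lemma finsetSum_le_dcost {F : Finset (Idx n)} {T : Set (Idx n)} (h : ↑F ⊆ T) :
    ∑ q ∈ F, dcap n δ q ≤ dcost n δ T := by
  rw [dcost_eq_tsum_indicator]
  calc ∑ q ∈ F, dcap n δ q = ∑ q ∈ F, T.indicator (dcap n δ) q := by
        apply Finset.sum_congr rfl
        intro q hq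
        rw [Set.indicator_of_mem (h hq)]
    _ ≤ _ := Summable.sum_le_tsum F (fun _ _ => zero_le) ENNReal.summable

lemma dcont_le_dcost {E : Set (Pt n)} {S : Set (Idx n)}
    (h : E ⊆ ⋃ q ∈ S, dcube n q) : dcont n δ E ≤ dcost n δ S := by
  exact iInf₂_le S h

lemma dcont_mono {E F : Set (Pt n)} (h : E ⊆ F) : dcont n δ E ≤ dcont n δ F := by
  apply le_iInf₂
  intro S hS
  exact dcont_le_dcost (h.trans hS)

/-- uniform scale bound from a capacity bound -/
lemma exists_scale_bound (hδ : 0 < δ) (B : ℝ≥0∞) (hB : B ≠ ⊤) :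
    ∃ K : ℤ, ∀ q : Idx n, dcap n δ q ≤ B → q.1 ≤ K := by
  obtain ⟨N, hN⟩ := pow_unbounded_of_one_lt (max 1 (B.toReal ^ (1/δ))) (one_lt_two (α := ℝ))
  refine ⟨(N:ℤ), fun q hq => ?_⟩
  have h1 : ((2:ℝ) ^ q.1) ^ δ ≤ B.toReal := by
    exact (ENNReal.ofReal_le_iff_le_toReal hB).mp hq
  have h2 : (2:ℝ) ^ q.1 ≤ B.toReal ^ (1/δ) := by
    have hpos : (0:ℝ) < 2 ^ q.1 := two_zpow_pos
    calc (2:ℝ) ^ q.1 = (((2:ℝ) ^ q.1) ^ δ) ^ (1/δ) := by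
          rw [← Real.rpow_mul hpos.le, mul_one_div, div_self (ne_of_gt hδ), Real.rpow_one]
      _ ≤ B.toReal ^ (1/δ) := by
          apply Real.rpow_le_rpow (by positivity) h1 (by positivity)
  have h3 : (2:ℝ) ^ q.1 < 2 ^ (N:ℤ) := by
    calc (2:ℝ) ^ q.1 ≤ B.toReal ^ (1/δ) := h2
      _ ≤ max 1 (B.toReal ^ (1/δ)) := le_max_right _ _
      _ < 2 ^ N := hN
      _ = 2 ^ (N:ℤ) := by rw [zpow_natCast]
  exact le_of_lt ((zpow_lt_zpow_iff_right₀ (by norm_num : (1:ℝ) < 2)).mp h3)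

end costs

section maxl

variable {n : ℕ} {δ : ℝ}

/-- maximal elements of a family of dyadic cubes -/
def maxl (n : ℕ) (F : Set (Idx n)) : Set (Idx n) :=
  {q ∈ F | ∀ r ∈ F, dcube n q ⊆ dcube n r → q = r}

lemma maxl_subset (F : Set (Idx n)) : maxl n F ⊆ F := fun _ h => h.1

lemma maxl_unique {F : Set (Idx n)} {q r : Idx n} (hq : q ∈ maxl n F) (hr : r ∈ maxl n F)
    {x : Pt n} (hxq : x ∈ dcube n q) (hxr : x ∈ dcube n r) : q = r := by
  rcases dcube_comparable hxq hxr with h | h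
  · exact hq.2 r hr.1 h
  · exact (hr.2 q hq.1 h).symm

lemma cover_maxl (hn : 0 < n) {F : Set (Idx n)} {K : ℤ}
    (hK : ∀ q ∈ F, q.1 ≤ K) :
    (⋃ q ∈ F, dcube n q) ⊆ ⋃ q ∈ maxl n F, dcube n q := by
  intro x hx
  obtain ⟨q, hq, hxq⟩ := Set.mem_iUnion₂.mp hx
  obtain ⟨r, hr, hsub, hmax⟩ := exists_maximal_above hn hK q hq
  exact Set.mem_biUnion ⟨hr, hmax⟩ (hsub hxq)

/-- the "meet" leftover family -/
def dmeet (n : ℕ) (F G : Set (Idx n)) : Set (Idx n) :=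
  ((F ∪ G) \ maxl n (F ∪ G)) ∪ (F ∩ G ∩ maxl n (F ∪ G))

lemma maxl_accounting (F G : Set (Idx n)) :
    dcost n δ (maxl n (F ∪ G)) + dcost n δ (dmeet n F G) ≤ dcost n δ F + dcost n δ G := by
  have h1 : dcost n δ (dmeet n F G)
      ≤ dcost n δ ((F ∪ G) \ maxl n (F ∪ G)) + dcost n δ (F ∩ G ∩ maxl n (F ∪ G)) :=
    dcost_union_le _ _
  have h2 : dcost n δ (maxl n (F ∪ G)) + dcost n δ ((F ∪ G) \ maxl n (F ∪ G))
      = dcost n δ (F ∪ G) := dcost_diff_add _ _ (maxl_subset _)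
  have h3 : dcost n δ (F ∩ G ∩ maxl n (F ∪ G)) ≤ dcost n δ (F ∩ G) :=
    dcost_mono Set.inter_subset_left
  calc dcost n δ (maxl n (F ∪ G)) + dcost n δ (dmeet n F G)
      ≤ dcost n δ (maxl n (F ∪ G)) + (dcost n δ ((F ∪ G) \ maxl n (F ∪ G))
          + dcost n δ (F ∩ G ∩ maxl n (F ∪ G))) := by
        exact add_le_add_right h1 _
    _ = dcost n δ (F ∪ G) + dcost n δ (F ∩ G ∩ maxl n (F ∪ G)) := by
        rw [← add_assoc, h2]
    _ ≤ dcost n δ (F ∪ G) + dcost n δ (F ∩ G) := add_le_add_right h3 _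
    _ = dcost n δ F + dcost n δ G := dcost_union_inter F G

lemma dmeet_cover {F G : Set (Idx n)} {x : Pt n}
    (hF : x ∈ ⋃ q ∈ F, dcube n q) (hG : x ∈ ⋃ q ∈ G, dcube n q) :
    x ∈ ⋃ q ∈ dmeet n F G, dcube n q := by
  obtain ⟨q, hq, hxq⟩ := Set.mem_iUnion₂.mp hF
  obtain ⟨r, hr, hxr⟩ := Set.mem_iUnion₂.mp hG
  rcases dcube_comparable hxq hxr with h | h
  · by_cases hm : q ∈ maxl n (F ∪ G)
    · have : q = r := hm.2 r (Or.inr hr) h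
      subst this
      exact Set.mem_biUnion (Or.inr ⟨⟨hq, hr⟩, hm⟩) hxq
    · exact Set.mem_biUnion (Or.inl ⟨Or.inl hq, hm⟩) hxq
  · by_cases hm : r ∈ maxl n (F ∪ G)
    · have : r = q := hm.2 q (Or.inl hq) h
      subst this
      exact Set.mem_biUnion (Or.inr ⟨⟨hq, hr⟩, hm⟩) hxr
    · exact Set.mem_biUnion (Or.inl ⟨Or.inr hr, hm⟩) hxr

end maxl
-- PART 4 : Davies' increasing sets lemma for dyadic content

lemma int_eventually_const {K : ℤ} {κ : ℕ → ℤ} (hmono : Monotone κ) (hb : ∀ m, κ m ≤ K) :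
    ∃ M, ∀ m, M ≤ m → κ m = κ M := by
  suffices H : ∀ (d : ℕ) (κ : ℕ → ℤ), Monotone κ → (∀ m, κ m ≤ K) → (K - κ 0).toNat ≤ d →
      ∃ M, ∀ m, M ≤ m → κ m = κ M from H (K - κ 0).toNat κ hmono hb le_rfl
  intro d
  induction d with
  | zero =>
    intro κ hmono hb hd
    refine ⟨0, fun m hm => ?_⟩
    have h1 := hb m
    have h2 := hmono (Nat.zero_le m)
    omega
  | succ d ih =>
    intro κ hmono hb hd
    by_cases hc : ∀ m, κ m = κ 0
    · exact ⟨0, fun m _ => (hc m).trans (hc 0).symm⟩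
    · push_neg at hc
      obtain ⟨m₁, hm₁⟩ := hc
      have hgt : κ 0 < κ m₁ := lt_of_le_of_ne (hmono (Nat.zero_le m₁)) (Ne.symm hm₁)
      obtain ⟨M', hM'⟩ := ih (fun j => κ (m₁ + j)) (fun a b hab => hmono (by omega))
        (fun j => hb _) (by have := hb m₁; simp only [Nat.add_zero]; omega)
      refine ⟨m₁ + M', fun m hm => ?_⟩
      have h1 : κ m = κ (m₁ + (m - m₁)) := by congr 1; omega
      rw [h1]
      exact hM' (m - m₁) (by omega)

variable {n : ℕ} {δ : ℝ}

lemma dcont_iUnion_le (hn : 0 < n) (hδ : 0 < δ)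
    (A : ℕ → Set (Pt n)) (hA : Monotone A) :
    dcont n δ (⋃ m, A m) ≤ ⨆ m, dcont n δ (A m) := by
  classical
  set L := ⨆ m, dcont n δ (A m) with hLdef
  apply ENNReal.le_of_forall_pos_le_add
  intro ε hε hLtop
  have hAmL : ∀ m, dcont n δ (A m) ≤ L := fun m => le_iSup (fun m => dcont n δ (A m)) m
  have hAfin : ∀ m, dcont n δ (A m) ≠ ⊤ := fun m => ((hAmL m).trans_lt hLtop).ne
  -- error terms
  set η : ℕ → ℝ≥0∞ := fun m => (ε : ℝ≥0∞) * 2⁻¹ ^ (m + 1) with hη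
  have hηpos : ∀ m, η m ≠ 0 := by
    intro m
    simp only [hη, ne_eq, mul_eq_zero, not_or]
    constructor
    · exact_mod_cast hε.ne'
    · exact pow_ne_zero _ (ENNReal.inv_ne_zero.mpr (by norm_num))
  have htsum : ∑' j, η j = (ε : ℝ≥0∞) := by
    rw [hη, ENNReal.tsum_mul_left]
    have h1 : ∑' (j:ℕ), (2⁻¹:ℝ≥0∞) ^ (j+1) = 2⁻¹ * ∑' (j:ℕ), (2⁻¹:ℝ≥0∞) ^ j := by
      rw [← ENNReal.tsum_mul_left]
      congr 1; funext j; ring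
    rw [h1, ENNReal.tsum_geometric]
    have h2 : (1 : ℝ≥0∞) - 2⁻¹ = 2⁻¹ := ENNReal.one_sub_inv_two
    rw [h2, inv_inv]
    have : (2⁻¹ : ℝ≥0∞) * 2 = 1 := by
      rw [mul_comm]
      exact ENNReal.mul_inv_cancel (by norm_num) (by norm_num)
    rw [this, mul_one]
  have hηsum : ∀ m, ∑ j ∈ Finset.range (m + 1), η j ≤ (ε : ℝ≥0∞) := by
    intro m
    rw [← htsum]
    exact Summable.sum_le_tsum _ (fun _ _ => zero_le) ENNReal.summable
  -- choose near-optimal covers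
  have hcov : ∀ m, ∃ T : Set (Idx n), (A m ⊆ ⋃ q ∈ T, dcube n q) ∧
      dcost n δ T ≤ dcont n δ (A m) + η m := by
    intro m
    have hlt : dcont n δ (A m) < dcont n δ (A m) + η m :=
      ENNReal.lt_add_right (hAfin m) (hηpos m)
    nth_rewrite 1 [dcont] at hlt
    obtain ⟨T, hT⟩ := iInf_lt_iff.mp hlt
    obtain ⟨hTcov, hTlt⟩ := iInf_lt_iff.mp hT
    exact ⟨T, hTcov, hTlt.le⟩
  choose S hScov hScost using hcov
  set B : ℝ≥0∞ := L + ε with hBdef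
  have hBtop : B ≠ ⊤ := by
    rw [hBdef]
    exact ENNReal.add_ne_top.mpr ⟨hLtop.ne, ENNReal.coe_ne_top⟩
  obtain ⟨K, hK⟩ := exists_scale_bound (n := n) hδ B hBtop
  have hηε : ∀ m, η m ≤ (ε : ℝ≥0∞) := by
    intro m
    rw [← htsum]
    exact ENNReal.le_tsum m
  have hScostB : ∀ m, dcost n δ (S m) ≤ B := fun m =>
    (hScost m).trans (add_le_add (hAmL m) (hηε m))
  -- the join families
  set FF : ℕ → Set (Idx n) :=
    fun m => Nat.rec (S 0) (fun m FFm => maxl n FFm ∪ S (m+1)) m with hFFdef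
  set J : ℕ → Set (Idx n) := fun m => maxl n (FF m) with hJdef
  have hFFsucc : ∀ m, FF (m+1) = J m ∪ S (m+1) := fun m => rfl
  -- the invariant
  have inv : ∀ m, (A m ⊆ ⋃ q ∈ J m, dcube n q) ∧
      dcost n δ (J m) ≤ dcont n δ (A m) + ∑ j ∈ Finset.range (m+1), η j := by
    intro m
    induction m with
    | zero =>
      have hsc : ∀ q ∈ FF 0, q.1 ≤ K := fun q hq =>
        hK q ((dcap_le_dcost hq).trans (hScostB 0))
      constructor
      · exact (hScov 0).trans (cover_maxl hn hsc)
      · calc dcost n δ (J 0) ≤ dcost n δ (FF 0) := dcost_mono (maxl_subset _)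
          _ ≤ dcont n δ (A 0) + η 0 := hScost 0
          _ = dcont n δ (A 0) + ∑ j ∈ Finset.range 1, η j := by
              rw [Finset.sum_range_one]
    | succ m ih =>
      have hJmB : dcost n δ (J m) ≤ B :=
        ih.2.trans (add_le_add (hAmL m) (hηsum m))
      have hsc : ∀ q ∈ FF (m+1), q.1 ≤ K := by
        intro q hq
        rw [hFFsucc] at hq
        rcases hq with hq | hq
        · exact hK q ((dcap_le_dcost hq).trans hJmB)
        · exact hK q ((dcap_le_dcost hq).trans (hScostB (m+1)))
      constructor
      · refine Set.Subset.trans ?_ (cover_maxl hn hsc)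
        refine (hScov (m+1)).trans ?_
        apply Set.iUnion₂_mono'
        intro q hq
        refine ⟨q, ?_, subset_rfl⟩
        rw [hFFsucc]
        exact Or.inr hq
      · have hacc := maxl_accounting (δ := δ) (J m) (S (m+1))
        have hmeet : dcont n δ (A m) ≤ dcost n δ (dmeet n (J m) (S (m+1))) := by
          apply dcont_le_dcost
          intro x hx
          exact dmeet_cover (ih.1 hx) (hScov (m+1) (hA (Nat.le_succ m) hx))
        have hJm1 : J (m+1) = maxl n (J m ∪ S (m+1)) := by rw [← hFFsucc m]
        have key : dcost n δ (J (m+1)) + dcont n δ (A m)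
            ≤ (dcont n δ (A (m+1)) + ∑ j ∈ Finset.range (m+2), η j) + dcont n δ (A m) := by
          calc dcost n δ (J (m+1)) + dcont n δ (A m)
              ≤ dcost n δ (J (m+1)) + dcost n δ (dmeet n (J m) (S (m+1))) :=
                add_le_add_right hmeet _
            _ = dcost n δ (maxl n (J m ∪ S (m+1))) + dcost n δ (dmeet n (J m) (S (m+1))) := by
                rw [hJm1]
            _ ≤ dcost n δ (J m) + dcost n δ (S (m+1)) := hacc
            _ ≤ (dcont n δ (A m) + ∑ j ∈ Finset.range (m+1), η j)
                + (dcont n δ (A (m+1)) + η (m+1)) := add_le_add ih.2 (hScost (m+1))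
            _ = (dcont n δ (A (m+1)) + ∑ j ∈ Finset.range (m+2), η j) + dcont n δ (A m) := by
                conv_rhs => rw [show m+2 = (m+1)+1 from rfl, Finset.sum_range_succ]
                ring
        exact (ENNReal.add_le_add_iff_right (hAfin m)).mp key
  have hJcostB : ∀ m, dcost n δ (J m) ≤ B := fun m =>
    (inv m).2.trans (add_le_add (hAmL m) (hηsum m))
  have hscFF : ∀ m, ∀ q ∈ FF m, q.1 ≤ K := by
    intro m q hq
    cases m with
    | zero => exact hK q ((dcap_le_dcost hq).trans (hScostB 0))
    | succ m =>
      rw [hFFsucc] at hq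
      rcases hq with hq | hq
      · exact hK q ((dcap_le_dcost hq).trans (hJcostB m))
      · exact hK q ((dcap_le_dcost hq).trans (hScostB (m+1)))
  have step : ∀ m q, q ∈ J m → ∃ r ∈ J (m+1), dcube n q ⊆ dcube n r := by
    intro m q hq
    have hqFF : q ∈ FF (m+1) := by
      rw [hFFsucc]
      exact Or.inl hq
    obtain ⟨r, hr, hsub, hmax⟩ := exists_maximal_above hn (hscFF (m+1)) q hqFF
    exact ⟨r, ⟨hr, hmax⟩, hsub⟩
  -- the limit family
  set Slim : Set (Idx n) := {q | ∃ M, ∀ m, M ≤ m → q ∈ J m} with hSlimdef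
  have hcovSlim : (⋃ m, A m) ⊆ ⋃ q ∈ Slim, dcube n q := by
    intro x hx
    obtain ⟨m₀, hm₀⟩ := Set.mem_iUnion.mp hx
    have hxJ : ∀ m, ∃ q, q ∈ J (m₀ + m) ∧ x ∈ dcube n q := by
      intro m
      have hxA : x ∈ A (m₀ + m) := hA (Nat.le_add_right m₀ m) hm₀
      obtain ⟨q, hq, hxq⟩ := Set.mem_iUnion₂.mp ((inv (m₀+m)).1 hxA)
      exact ⟨q, hq, hxq⟩
    choose c hc hxc using hxJ
    have hchain : ∀ m, dcube n (c m) ⊆ dcube n (c (m+1)) := by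
      intro m
      obtain ⟨r, hr, hsub⟩ := step (m₀+m) (c m) (hc m)
      have hxr : x ∈ dcube n r := hsub (hxc m)
      have hreq : r = c (m+1) := by
        have h1 : r ∈ J (m₀ + (m+1)) := by
          rw [show m₀ + (m+1) = (m₀ + m) + 1 by omega]
          exact hr
        exact maxl_unique h1 (hc (m+1)) hxr (hxc (m+1))
      rw [← hreq]
      exact hsub
    have hmonosub : ∀ a b, a ≤ b → dcube n (c a) ⊆ dcube n (c b) := by
      intro a b hab
      induction b, hab using Nat.le_induction with
      | base => exact subset_rfl
      | succ b hab ih => exact ih.trans (hchain b)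
    have hκmono : Monotone (fun m => (c m).1) :=
      fun a b hab => scale_le_of_subset hn (hmonosub a b hab)
    have hκbd : ∀ m, (c m).1 ≤ K :=
      fun m => hK _ ((dcap_le_dcost (hc m)).trans (hJcostB (m₀ + m)))
    obtain ⟨M, hM⟩ := int_eventually_const hκmono hκbd
    have hceq : ∀ m, M ≤ m → c m = c M := by
      intro m hm
      exact (idx_eq_of_subset_scale_eq (hM m hm).symm (hmonosub M m hm)).symm
    refine Set.mem_biUnion ?_ (hxc M)
    refine ⟨m₀ + M, fun j hj => ?_⟩
    have h2 : M ≤ j - m₀ := by omega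
    have h3 := hc (j - m₀)
    rw [show m₀ + (j - m₀) = j by omega] at h3
    exact hceq (j - m₀) h2 ▸ h3
  -- cost of the limit family
  have hSlimcost : dcost n δ Slim ≤ L + ε := by
    rw [dcost, ENNReal.tsum_eq_iSup_sum]
    apply iSup_le
    intro s
    have hmem : ∀ q : Slim, ∃ M, ∀ m, M ≤ m → (q : Idx n) ∈ J m := fun q => q.2
    refine le_trans ?_ (hJcostB (s.sup (fun q => Classical.choose (hmem q))))
    have hsub : ∀ q ∈ s, (q : Idx n) ∈ J (s.sup (fun q => Classical.choose (hmem q))) :=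
      fun q hq => Classical.choose_spec (hmem q) _ (Finset.le_sup (f := fun q => Classical.choose (hmem q)) hq)
    calc ∑ q ∈ s, dcap n δ (q : Idx n)
        = ∑ q ∈ s.image Subtype.val, dcap n δ q := by
          rw [Finset.sum_image]
          intro a _ b _ h
          exact Subtype.ext h
      _ ≤ dcost n δ (J (s.sup (fun q => Classical.choose (hmem q)))) := by
          apply finsetSum_le_dcost
          intro q hq
          obtain ⟨a, ha, rfl⟩ := Finset.mem_image.mp hq
          exact hsub a ha
  exact (dcont_le_dcost hcovSlim).trans hSlimcost
-- PART 5 : comparison geometry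

section compare

variable {n : ℕ} {δ : ℝ}

lemma coord_dist_le (x y : Pt n) (i : Fin n) : |x i - y i| ≤ dist x y := by
  rw [EuclideanSpace.dist_eq]
  have h1 : dist (x i) (y i) ^ 2 ≤ ∑ j, dist (x j) (y j) ^ 2 :=
    Finset.single_le_sum (f := fun j => dist (x j) (y j) ^ 2)
      (fun j _ => sq_nonneg _) (Finset.mem_univ i)
  calc |x i - y i| = Real.sqrt (dist (x i) (y i) ^ 2) := by
        rw [Real.sqrt_sq_eq_abs, Real.dist_eq, abs_abs]
    _ ≤ _ := Real.sqrt_le_sqrt h1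

lemma dcube_subset_ball (q : Idx n) :
    dcube n q ⊆ Metric.ball (corner n q) (((n:ℝ)+1) * 2 ^ q.1) := by
  intro x hx
  have hzp : (0:ℝ) < 2 ^ q.1 := two_zpow_pos
  have hcoord : ∀ i, |x i - corner n q i| < 2 ^ q.1 := by
    intro i
    obtain ⟨h1, h2⟩ := Int.floor_eq_iff.mp (hx i)
    have hc : corner n q i = (q.2 i : ℝ) * 2 ^ q.1 := rfl
    rw [le_div_iff₀ hzp] at h1
    rw [div_lt_iff₀ hzp] at h2
    rw [hc, abs_lt]
    constructor <;> nlinarith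
  rw [Metric.mem_ball, EuclideanSpace.dist_eq]
  have hsum : ∑ i, dist (x i) (corner n q i) ^ 2 ≤ (n:ℝ) * (2 ^ q.1)^2 := by
    calc ∑ i, dist (x i) (corner n q i) ^ 2 ≤ ∑ _i : Fin n, ((2:ℝ) ^ q.1)^2 := by
          apply Finset.sum_le_sum
          intro i _
          rw [Real.dist_eq]
          have h := (hcoord i).le
          nlinarith [abs_nonneg (x i - corner n q i)]
      _ = (n:ℝ) * (2 ^ q.1)^2 := by
          rw [Finset.sum_const, Finset.card_univ, Fintype.card_fin, nsmul_eq_mul]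
  have hlt : (n:ℝ) * (2 ^ q.1)^2 < (((n:ℝ)+1) * 2 ^ q.1)^2 := by
    have : (0:ℝ) ≤ (n:ℝ) := Nat.cast_nonneg n
    nlinarith
  calc Real.sqrt (∑ i, dist (x i) (corner n q i) ^ 2)
      ≤ Real.sqrt ((n:ℝ) * (2 ^ q.1)^2) := Real.sqrt_le_sqrt hsum
    _ < ((n:ℝ)+1) * 2 ^ q.1 := by
        rw [show ((n:ℝ)+1) * 2 ^ q.1 = Real.sqrt ((((n:ℝ)+1) * 2 ^ q.1)^2) by
          rw [Real.sqrt_sq (by positivity)]]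
        exact (Real.sqrt_lt_sqrt (by positivity) hlt)

lemma ball_subset_cubes {x : Pt n} {r : ℝ} {k : ℤ} (h2r : 2 * r ≤ 2 ^ k) :
    Metric.ball x r ⊆
      ⋃ b : Fin n → Bool,
        dcube n (k, fun i => ⌊(x i - r) / 2 ^ k⌋ + if b i then 1 else 0) := by
  intro y hy
  rw [Metric.mem_ball] at hy
  have hzp : (0:ℝ) < 2 ^ k := two_zpow_pos
  have hyc : ∀ i, |y i - x i| < r := fun i => lt_of_le_of_lt (coord_dist_le y x i) hy
  have hfl : ∀ i, ⌊y i / (2:ℝ) ^ k⌋ = ⌊(x i - r) / (2:ℝ) ^ k⌋ ∨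
      ⌊y i / (2:ℝ) ^ k⌋ = ⌊(x i - r) / (2:ℝ) ^ k⌋ + 1 := by
    intro i
    have h1 : (x i - r) ≤ y i := by have := (abs_lt.mp (hyc i)).1; linarith
    have h2 : y i ≤ (x i - r) + 2 ^ k := by
      have := (abs_lt.mp (hyc i)).2; linarith
    have hm1 : ⌊(x i - r) / (2:ℝ) ^ k⌋ ≤ ⌊y i / (2:ℝ) ^ k⌋ :=
      Int.floor_le_floor (by exact div_le_div_of_nonneg_right h1 hzp.le |>.trans_eq rfl)
    have hm2 : ⌊y i / (2:ℝ) ^ k⌋ ≤ ⌊(x i - r) / (2:ℝ) ^ k⌋ + 1 := by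
      have hstep : y i / (2:ℝ) ^ k ≤ (x i - r) / 2 ^ k + 1 := by
        rw [div_add' _ _ _ (ne_of_gt hzp)]
        exact div_le_div_of_nonneg_right (by linarith) hzp.le
      calc ⌊y i / (2:ℝ) ^ k⌋ ≤ ⌊(x i - r) / (2:ℝ) ^ k + 1⌋ := Int.floor_le_floor hstep
        _ = ⌊(x i - r) / (2:ℝ) ^ k⌋ + 1 := by
            exact Int.floor_add_one ((x i - r) / (2:ℝ) ^ k)
    omega
  refine Set.mem_iUnion.mpr
    ⟨fun i => decide (⌊y i / (2:ℝ) ^ k⌋ = ⌊(x i - r) / (2:ℝ) ^ k⌋ + 1), ?_⟩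
  intro i
  show ⌊y i / (2:ℝ) ^ k⌋ = ⌊(x i - r) / (2:ℝ) ^ k⌋ + ite _ 1 0
  rcases hfl i with h | h
  · have hne : ¬ (⌊y i / (2:ℝ) ^ k⌋ = ⌊(x i - r) / (2:ℝ) ^ k⌋ + 1) := by omega
    simp [hne, h]
  · simp [h]

lemma exists_good_scale {r : ℝ} (hr : 0 < r) :
    ∃ k : ℤ, 2 * r ≤ 2 ^ k ∧ (2:ℝ) ^ k ≤ 4 * r := by
  obtain ⟨k0, hk0⟩ := exists_mem_Ioc_zpow (by linarith : (0:ℝ) < 2 * r) one_lt_two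
  refine ⟨k0 + 1, hk0.2, ?_⟩
  have h1 : (2:ℝ) ^ (k0 + 1) = 2 * 2 ^ k0 := by
    rw [zpow_add₀ (by norm_num : (2:ℝ) ≠ 0), zpow_one]; ring
  have h2 : (2:ℝ) ^ k0 < 2 * r := hk0.1
  rw [h1]; linarith

end compare

-- PART 6 : comparisons with ball content

section hc

variable {n : ℕ} {δ : ℝ}

lemma hc_mono {E F : Set (Pt n)} (h : E ⊆ F) :
    hausdorffContent n δ E ≤ hausdorffContent n δ F := by
  refine le_iInf fun c => le_iInf fun hp => le_iInf fun hc => ?_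
  exact iInf_le_of_le c (iInf_le_of_le hp (iInf_le_of_le (h.trans hc) le_rfl))

lemma dcont_le_hc (hδ : 0 < δ) (hδn : δ ≤ (n:ℝ)) (E : Set (Pt n)) :
    dcont n δ E ≤ ENNReal.ofReal ((8:ℝ)^(n:ℕ)) * hausdorffContent n δ E := by
  classical
  set C2 : ℝ≥0∞ := ENNReal.ofReal ((8:ℝ)^(n:ℕ)) with hC2def
  have hC2top : C2 ≠ ⊤ := ENNReal.ofReal_ne_top
  have hC20 : C2 ≠ 0 := by
    rw [hC2def, ne_eq, ENNReal.ofReal_eq_zero, not_le]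
    positivity
  apply ENNReal.le_of_forall_pos_le_add
  intro ε hε hb
  have hH : hausdorffContent n δ E ≠ ⊤ := by
    intro h
    rw [h, ENNReal.mul_top hC20] at hb
    exact lt_irrefl _ hb
  have hη0 : (ε : ℝ≥0∞) / C2 ≠ 0 := by
    simp only [ne_eq, ENNReal.div_eq_zero_iff, not_or]
    exact ⟨by exact_mod_cast hε.ne', hC2top⟩
  have hlt : hausdorffContent n δ E < hausdorffContent n δ E + (ε : ℝ≥0∞) / C2 :=
    ENNReal.lt_add_right hH hη0
  nth_rewrite 1 [hausdorffContent] at hlt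
  obtain ⟨c, hc1⟩ := iInf_lt_iff.mp hlt
  obtain ⟨hpos, hc2⟩ := iInf_lt_iff.mp hc1
  obtain ⟨hcov, hcost⟩ := iInf_lt_iff.mp hc2
  have hscale : ∀ j : ℕ, ∃ k : ℤ, 2 * (c j).2 ≤ 2 ^ k ∧ (2:ℝ) ^ k ≤ 4 * (c j).2 :=
    fun j => exists_good_scale (hpos j)
  choose k hk1 hk2 using hscale
  set g : ℕ × (Fin n → Bool) → Idx n := fun p =>
    (k p.1, fun i => ⌊((c p.1).1 i - (c p.1).2) / (2:ℝ) ^ (k p.1)⌋ + if p.2 i then 1 else 0)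
    with hg
  have hcovg : E ⊆ ⋃ q ∈ Set.range g, dcube n q := by
    intro x hx
    obtain ⟨j, hj⟩ := Set.mem_iUnion.mp (hcov hx)
    obtain ⟨b, hb'⟩ := Set.mem_iUnion.mp (ball_subset_cubes (hk1 j) hj)
    exact Set.mem_biUnion ⟨(j, b), rfl⟩ hb'
  have h2 : dcost n δ (Set.range g) ≤ ∑' p : ℕ × (Fin n → Bool), dcap n δ (g p) := by
    have hsec : ∀ y : Set.range g, ∃ p, g p = (y : Idx n) := fun y => y.2
    choose sec hsec' using hsec
    have hinj : Function.Injective sec := by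
      intro a b hab
      apply Subtype.ext
      rw [← hsec' a, ← hsec' b, hab]
    exact Summable.tsum_le_tsum_of_inj sec hinj (fun _ _ => zero_le)
      (fun y => le_of_eq (by rw [hsec' y])) ENNReal.summable ENNReal.summable
  have h4 : ∀ j : ℕ, ∑' b : Fin n → Bool, dcap n δ (g (j, b))
      ≤ C2 * ENNReal.ofReal ((c j).2 ^ δ) := by
    intro j
    rw [tsum_fintype]
    have hcap : ∀ b : Fin n → Bool, dcap n δ (g (j, b))
        = ENNReal.ofReal (((2:ℝ) ^ (k j)) ^ δ) := fun b => rfl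
    have hone : ENNReal.ofReal (((2:ℝ) ^ (k j)) ^ δ)
        ≤ ENNReal.ofReal ((4:ℝ)^(n:ℕ)) * ENNReal.ofReal ((c j).2 ^ δ) := by
      rw [← ENNReal.ofReal_mul (by positivity)]
      apply ENNReal.ofReal_le_ofReal
      have hr : 0 < (c j).2 := hpos j
      calc ((2:ℝ) ^ (k j)) ^ δ ≤ (4 * (c j).2) ^ δ :=
            Real.rpow_le_rpow (le_of_lt two_zpow_pos) (hk2 j) hδ.le
        _ = (4:ℝ) ^ δ * (c j).2 ^ δ := Real.mul_rpow (by norm_num) hr.le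
        _ ≤ (4:ℝ)^(n:ℕ) * (c j).2 ^ δ := by
            apply mul_le_mul_of_nonneg_right _ (Real.rpow_nonneg hr.le δ)
            rw [← Real.rpow_natCast 4 n]
            exact Real.rpow_le_rpow_of_exponent_le (by norm_num) hδn
    have hconst : ∑ b : Fin n → Bool, dcap n δ (g (j, b))
        = (2^n : ℕ) • ENNReal.ofReal (((2:ℝ) ^ (k j)) ^ δ) := by
      rw [Finset.sum_congr rfl (fun b _ => hcap b), Finset.sum_const, Finset.card_univ]
      congr 1
      simp
    rw [hconst, nsmul_eq_mul]
    calc ((2^n : ℕ) : ℝ≥0∞) * ENNReal.ofReal (((2:ℝ) ^ (k j)) ^ δ)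
        ≤ ((2^n : ℕ) : ℝ≥0∞) * (ENNReal.ofReal ((4:ℝ)^(n:ℕ)) * ENNReal.ofReal ((c j).2 ^ δ)) :=
          mul_le_mul_right hone _
      _ = C2 * ENNReal.ofReal ((c j).2 ^ δ) := by
          rw [← mul_assoc, hC2def]
          congr 1
          rw [show ((2^n : ℕ) : ℝ≥0∞) = ENNReal.ofReal ((2:ℝ)^n) by
              rw [ENNReal.ofReal_pow (by norm_num)]
              simp]
          rw [← ENNReal.ofReal_mul (by positivity), ← mul_pow]
          norm_num
  calc dcont n δ E ≤ dcost n δ (Set.range g) := dcont_le_dcost hcovg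
    _ ≤ ∑' p : ℕ × (Fin n → Bool), dcap n δ (g p) := h2
    _ = ∑' j : ℕ, ∑' b : Fin n → Bool, dcap n δ (g (j, b)) :=
        ENNReal.tsum_prod (f := fun j b => dcap n δ (g (j, b)))
    _ ≤ ∑' j : ℕ, C2 * ENNReal.ofReal ((c j).2 ^ δ) :=
        Summable.tsum_le_tsum h4 ENNReal.summable ENNReal.summable
    _ = C2 * ∑' j, ENNReal.ofReal ((c j).2 ^ δ) := ENNReal.tsum_mul_left
    _ ≤ C2 * (hausdorffContent n δ E + (ε : ℝ≥0∞) / C2) := mul_le_mul_right hcost.le _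
    _ = C2 * hausdorffContent n δ E + ε := by
        rw [mul_add, ENNReal.mul_div_cancel hC20 hC2top]

lemma hc_le_dcont (hδ : 0 < δ) (hδn : δ ≤ (n:ℝ)) (E : Set (Pt n)) :
    hausdorffContent n δ E ≤ ENNReal.ofReal (((n:ℝ)+1)^(n:ℕ)) * dcont n δ E := by
  classical
  set C1 : ℝ≥0∞ := ENNReal.ofReal (((n:ℝ)+1)^(n:ℕ)) with hC1def
  have hC1top : C1 ≠ ⊤ := ENNReal.ofReal_ne_top
  have hC10 : C1 ≠ 0 := by
    rw [hC1def, ne_eq, ENNReal.ofReal_eq_zero, not_le]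
    positivity
  apply ENNReal.le_of_forall_pos_le_add
  intro ε hε hb
  have hD : dcont n δ E ≠ ⊤ := by
    intro h
    rw [h, ENNReal.mul_top hC10] at hb
    exact lt_irrefl _ hb
  -- extract a near-optimal dyadic cover
  have hη0 : (ε : ℝ≥0∞) / 2 / C1 ≠ 0 := by
    simp only [ne_eq, ENNReal.div_eq_zero_iff, not_or]
    refine ⟨⟨by exact_mod_cast hε.ne', by norm_num⟩, hC1top⟩
  have hlt : dcont n δ E < dcont n δ E + (ε : ℝ≥0∞) / 2 / C1 :=
    ENNReal.lt_add_right hD hη0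
  nth_rewrite 1 [dcont] at hlt
  obtain ⟨S, hS1⟩ := iInf_lt_iff.mp hlt
  obtain ⟨hScov, hScost⟩ := iInf_lt_iff.mp hS1
  -- the junk geometric series
  set w : ℝ≥0∞ := ENNReal.ofReal ((2⁻¹:ℝ) ^ δ) with hwdef
  have hwlt : w < 1 := by
    rw [hwdef]
    apply ENNReal.ofReal_lt_one.mpr
    exact Real.rpow_lt_one (by norm_num) (by norm_num) hδ
  set Z : ℝ≥0∞ := ∑' j : ℕ, w ^ j with hZdef
  have hZtop : Z ≠ ⊤ := by
    rw [hZdef, ENNReal.tsum_geometric]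
    simp [ENNReal.inv_ne_top, tsub_eq_zero_iff_le, hwlt.not_ge]
  have hZ1 : 1 ≤ Z := by
    rw [hZdef]
    calc (1:ℝ≥0∞) = w ^ 0 := by norm_num
      _ ≤ _ := ENNReal.le_tsum 0
  have hZ0 : Z ≠ 0 := fun h => by simp [h] at hZ1
  -- choose the junk scaling
  have hq0 : (0:ℝ≥0∞) < (ε : ℝ≥0∞) / 2 / Z := by
    apply ENNReal.div_pos _ hZtop
    simp only [ne_eq, ENNReal.div_eq_zero_iff, not_or]
    exact ⟨by exact_mod_cast hε.ne', by norm_num⟩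
  have hqtop : (ε : ℝ≥0∞) / 2 / Z ≠ ⊤ :=
    (ENNReal.div_lt_top (ENNReal.div_lt_top ENNReal.coe_ne_top (by norm_num)).ne hZ0).ne
  set t : ℝ := min 1 (((ε : ℝ≥0∞) / 2 / Z).toReal) with htdef
  have ht0 : 0 < t := by
    rw [htdef]
    exact lt_min one_pos (ENNReal.toReal_pos hq0.ne' hqtop)
  have htle : ENNReal.ofReal t ≤ (ε : ℝ≥0∞) / 2 / Z := by
    rw [htdef]
    calc ENNReal.ofReal (min 1 (((ε : ℝ≥0∞) / 2 / Z).toReal))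
        ≤ ENNReal.ofReal (((ε : ℝ≥0∞) / 2 / Z).toReal) :=
          ENNReal.ofReal_le_ofReal (min_le_right _ _)
      _ = (ε : ℝ≥0∞) / 2 / Z := ENNReal.ofReal_toReal hqtop
  set a : ℝ := t ^ (1/δ) with hadef
  have ha0 : 0 < a := Real.rpow_pos_of_pos ht0 _
  have haδ : a ^ δ = t := by
    rw [hadef, ← Real.rpow_mul ht0.le, one_div, inv_mul_cancel₀ (ne_of_gt hδ), Real.rpow_one]
  -- the ball sequence
  set bs : ℕ → Pt n × ℝ := fun j =>
    if h : ∃ q, q ∈ S ∧ Encodable.encode q = j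
      then (corner n h.choose, ((n:ℝ)+1) * 2 ^ h.choose.1)
      else (0, a * (2⁻¹:ℝ)^j) with hbsdef
  have hbspos : ∀ j, 0 < (bs j).2 := by
    intro j
    simp only [hbsdef]
    by_cases h : ∃ q, q ∈ S ∧ Encodable.encode q = j
    · rw [dif_pos h]
      have : (0:ℝ) < 2 ^ (h.choose.1) := two_zpow_pos
      positivity
    · rw [dif_neg h]
      positivity
  have hbscov : E ⊆ ⋃ j, Metric.ball (bs j).1 (bs j).2 := by
    intro x hx
    obtain ⟨q, hqS, hxq⟩ := Set.mem_iUnion₂.mp (hScov hx)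
    refine Set.mem_iUnion.mpr ⟨Encodable.encode q, ?_⟩
    have hex : ∃ q', q' ∈ S ∧ Encodable.encode q' = Encodable.encode q := ⟨q, hqS, rfl⟩
    have hbj : bs (Encodable.encode q)
        = (corner n hex.choose, ((n:ℝ)+1) * 2 ^ hex.choose.1) := by
      rw [hbsdef]
      exact dif_pos hex
    have hqeq : hex.choose = q := Encodable.encode_injective hex.choose_spec.2
    rw [hbj, hqeq]
    exact dcube_subset_ball q hxq
  have hHle : hausdorffContent n δ E ≤ ∑' j, ENNReal.ofReal ((bs j).2 ^ δ) :=
    iInf_le_of_le bs (iInf_le_of_le hbspos (iInf_le_of_le hbscov le_rfl))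
  -- split the cost
  set Gf : ℕ → ℝ≥0∞ := fun j =>
    if h : ∃ q, q ∈ S ∧ Encodable.encode q = j then C1 * dcap n δ h.choose else 0 with hGfdef
  have hsplit : ∀ j, ENNReal.ofReal ((bs j).2 ^ δ) ≤ Gf j + ENNReal.ofReal t * w ^ j := by
    intro j
    simp only [hbsdef, hGfdef]
    by_cases h : ∃ q, q ∈ S ∧ Encodable.encode q = j
    · rw [dif_pos h, dif_pos h]
      apply le_add_right
      -- ofReal((((n:ℝ)+1) * 2^k)^δ) ≤ C1 * dcap
      have hzp : (0:ℝ) < 2 ^ (h.choose.1) := two_zpow_pos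
      rw [hC1def, dcap, ← ENNReal.ofReal_mul (by positivity)]
      apply ENNReal.ofReal_le_ofReal
      calc (((n:ℝ)+1) * 2 ^ h.choose.1) ^ δ
          = ((n:ℝ)+1) ^ δ * ((2:ℝ) ^ h.choose.1) ^ δ :=
            Real.mul_rpow (by positivity) hzp.le
        _ ≤ (((n:ℝ)+1)^(n:ℕ)) * ((2:ℝ) ^ h.choose.1) ^ δ := by
            apply mul_le_mul_of_nonneg_right _ (Real.rpow_nonneg hzp.le δ)
            rw [← Real.rpow_natCast ((n:ℝ)+1) n]
            apply Real.rpow_le_rpow_of_exponent_le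
            · have := Nat.cast_nonneg (α := ℝ) n
              linarith
            · exact hδn
    · rw [dif_neg h, dif_neg h]
      apply le_add_left
      apply le_of_eq
      rw [Real.mul_rpow ha0.le (by positivity), haδ,
        ENNReal.ofReal_mul ht0.le]
      congr 1
      rw [hwdef, ← ENNReal.ofReal_pow (by positivity)]
      congr 1
      rw [← Real.rpow_natCast ((2⁻¹:ℝ)) j, ← Real.rpow_natCast ((2⁻¹:ℝ)^δ) j,
        ← Real.rpow_mul (by norm_num), ← Real.rpow_mul (by norm_num), mul_comm]
  have hGsum : ∑' j, Gf j = C1 * dcost n δ S := by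
    rw [dcost, ← ENNReal.tsum_mul_left]
    apply tsum_eq_tsum_of_ne_zero_bij (fun y => Encodable.encode ((y.1 : ↥S) : Idx n))
    · intro y1 y2 hy
      apply Subtype.ext
      apply Subtype.ext
      exact Encodable.encode_injective hy
    · intro j hj
      rw [Function.mem_support] at hj
      simp only [hGfdef] at hj
      by_cases h : ∃ q, q ∈ S ∧ Encodable.encode q = j
      · refine ⟨⟨⟨h.choose, h.choose_spec.1⟩, ?_⟩, h.choose_spec.2⟩
        rw [Function.mem_support]
        exact mul_ne_zero hC10 (ne_of_gt (dcap_pos hδ _))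
      · rw [dif_neg h] at hj
        exact absurd rfl hj
    · intro y
      have hex : ∃ q, q ∈ S ∧ Encodable.encode q = Encodable.encode ((y.1 : ↥S) : Idx n) :=
        ⟨((y.1 : ↥S) : Idx n), (y.1 : ↥S).2, rfl⟩
      simp only [hGfdef, dif_pos hex]
      have hcheq : hex.choose = ((y.1 : ↥S) : Idx n) :=
        Encodable.encode_injective hex.choose_spec.2
      rw [hcheq]
  have hJsum : ∑' j : ℕ, ENNReal.ofReal t * w ^ j ≤ (ε : ℝ≥0∞) / 2 := by
    rw [ENNReal.tsum_mul_left, ← hZdef]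
    calc ENNReal.ofReal t * Z ≤ ((ε : ℝ≥0∞) / 2 / Z) * Z := mul_le_mul_left htle _
      _ = (ε : ℝ≥0∞) / 2 := ENNReal.div_mul_cancel hZ0 hZtop
  calc hausdorffContent n δ E ≤ ∑' j, ENNReal.ofReal ((bs j).2 ^ δ) := hHle
    _ ≤ ∑' j, (Gf j + ENNReal.ofReal t * w ^ j) :=
        Summable.tsum_le_tsum hsplit ENNReal.summable ENNReal.summable
    _ = ∑' j, Gf j + ∑' j, ENNReal.ofReal t * w ^ j := ENNReal.tsum_add
    _ ≤ C1 * dcost n δ S + (ε : ℝ≥0∞) / 2 := by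
        rw [hGsum]
        exact add_le_add_right hJsum _
    _ ≤ C1 * (dcont n δ E + (ε : ℝ≥0∞) / 2 / C1) + (ε : ℝ≥0∞) / 2 := by
        apply add_le_add_left
        exact mul_le_mul_right hScost.le _
    _ = C1 * dcont n δ E + ((ε : ℝ≥0∞) / 2 + (ε : ℝ≥0∞) / 2) := by
        rw [mul_add, ENNReal.mul_div_cancel hC10 hC1top, add_assoc]
    _ = C1 * dcont n δ E + ε := by
        rw [ENNReal.add_halves]

end hc

-- PART 7 : final assembly

section final

variable {n : ℕ} {δ : ℝ}

lemma hc_iUnion_le (hn : 0 < n) (hδ : 0 < δ) (hδn : δ ≤ (n:ℝ))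
    (A : ℕ → Set (Pt n)) (hA : Monotone A) :
    hausdorffContent n δ (⋃ m, A m)
      ≤ ENNReal.ofReal ((((n:ℝ)+1)^(n:ℕ)) * (8:ℝ)^(n:ℕ)) *
        ⨆ m, hausdorffContent n δ (A m) := by
  rw [ENNReal.ofReal_mul (by positivity)]
  calc hausdorffContent n δ (⋃ m, A m)
      ≤ ENNReal.ofReal (((n:ℝ)+1)^(n:ℕ)) * dcont n δ (⋃ m, A m) := hc_le_dcont hδ hδn _
    _ ≤ ENNReal.ofReal (((n:ℝ)+1)^(n:ℕ)) * ⨆ m, dcont n δ (A m) :=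
        mul_le_mul_right (dcont_iUnion_le hn hδ A hA) _
    _ ≤ ENNReal.ofReal (((n:ℝ)+1)^(n:ℕ)) *
          ⨆ m, (ENNReal.ofReal ((8:ℝ)^(n:ℕ)) * hausdorffContent n δ (A m)) :=
        mul_le_mul_right (iSup_mono (fun m => dcont_le_hc hδ hδn (A m))) _
    _ = _ := by rw [← ENNReal.mul_iSup, mul_assoc]

lemma hc_liminf_le (hn : 0 < n) (hδ : 0 < δ) (hδn : δ ≤ (n:ℝ))
    (f : ℕ → Pt n → ℝ≥0∞) (t : ℝ) :
    hausdorffContent n δ {x | ENNReal.ofReal t < Filter.liminf (fun i => f i x) Filter.atTop}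
      ≤ ENNReal.ofReal ((((n:ℝ)+1)^(n:ℕ)) * (8:ℝ)^(n:ℕ)) *
        Filter.liminf (fun i => hausdorffContent n δ {x | ENNReal.ofReal t < f i x})
          Filter.atTop := by
  set G : ℕ → Set (Pt n) :=
    fun N => ⋂ i, ⋂ (_ : N ≤ i), {x | ENNReal.ofReal t < f i x} with hG
  have hGmono : Monotone G := by
    intro N N' hNN' x hx
    simp only [hG, Set.mem_iInter] at hx ⊢
    intro i hi
    exact hx i (le_trans hNN' hi)
  have hsub : {x | ENNReal.ofReal t < Filter.liminf (fun i => f i x) Filter.atTop}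
      ⊆ ⋃ N, G N := by
    intro x hx
    rw [Set.mem_setOf_eq, Filter.liminf_eq_iSup_iInf_of_nat, lt_iSup_iff] at hx
    obtain ⟨N, hN⟩ := hx
    refine Set.mem_iUnion.mpr ⟨N, ?_⟩
    simp only [hG, Set.mem_iInter]
    intro i hi
    exact lt_of_lt_of_le hN (iInf₂_le i hi)
  have hGle : ∀ N, hausdorffContent n δ (G N)
      ≤ ⨅ i, ⨅ (_ : i ≥ N), hausdorffContent n δ {x | ENNReal.ofReal t < f i x} := by
    intro N
    refine le_iInf₂ fun i hi => ?_
    apply hc_mono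
    intro x hx
    simp only [hG, Set.mem_iInter] at hx
    exact hx i hi
  calc hausdorffContent n δ {x | ENNReal.ofReal t < Filter.liminf (fun i => f i x) Filter.atTop}
      ≤ hausdorffContent n δ (⋃ N, G N) := hc_mono hsub
    _ ≤ ENNReal.ofReal ((((n:ℝ)+1)^(n:ℕ)) * (8:ℝ)^(n:ℕ)) *
          ⨆ N, hausdorffContent n δ (G N) := hc_iUnion_le hn hδ hδn G hGmono
    _ ≤ ENNReal.ofReal ((((n:ℝ)+1)^(n:ℕ)) * (8:ℝ)^(n:ℕ)) *
          ⨆ N, ⨅ i, ⨅ (_ : i ≥ N), hausdorffContent n δ {x | ENNReal.ofReal t < f i x} :=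
        mul_le_mul_right (iSup_mono hGle) _
    _ = _ := by rw [Filter.liminf_eq_iSup_iInf_of_nat]

end final

end HCF

/-- A Fatou-type lemma for the Choquet integral with respect to the Hausdorff
content. -/
theorem stmt_16 (n : ℕ) (hn : 1 ≤ n) :
    ∃ c : ℝ, 0 < c ∧ ∀ δ : ℝ, 0 < δ → δ ≤ n →
      ∀ f : ℕ → EuclideanSpace ℝ (Fin n) → ℝ≥0∞,
        choquetIntegral n δ (fun x => Filter.liminf (fun i => f i x) Filter.atTop)
          ≤ ENNReal.ofReal c *
            Filter.liminf (fun i => choquetIntegral n δ (f i)) Filter.atTop := by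
  refine ⟨(((n:ℝ)+1)^(n:ℕ)) * (8:ℝ)^(n:ℕ), by positivity, ?_⟩
  intro δ hδ hδn f
  have hmeas : ∀ i : ℕ, Measurable (fun t : ℝ =>
      hausdorffContent n δ {x | ENNReal.ofReal t < f i x}) := by
    intro i
    apply Antitone.measurable
    intro s t hst
    apply HCF.hc_mono
    intro x hx
    exact lt_of_le_of_lt (ENNReal.ofReal_le_ofReal hst) hx
  calc choquetIntegral n δ (fun x => Filter.liminf (fun i => f i x) Filter.atTop)
      = ∫⁻ t in Set.Ioi (0:ℝ),
          hausdorffContent n δ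
            {x | ENNReal.ofReal t < Filter.liminf (fun i => f i x) Filter.atTop} := rfl
    _ ≤ ∫⁻ t in Set.Ioi (0:ℝ),
          (ENNReal.ofReal ((((n:ℝ)+1)^(n:ℕ)) * (8:ℝ)^(n:ℕ)) *
            Filter.liminf
              (fun i => hausdorffContent n δ {x | ENNReal.ofReal t < f i x}) Filter.atTop) :=
        lintegral_mono (fun t => HCF.hc_liminf_le (by omega) hδ hδn f t)
    _ = ENNReal.ofReal ((((n:ℝ)+1)^(n:ℕ)) * (8:ℝ)^(n:ℕ)) *
          ∫⁻ t in Set.Ioi (0:ℝ),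
            Filter.liminf
              (fun i => hausdorffContent n δ {x | ENNReal.ofReal t < f i x}) Filter.atTop :=
        lintegral_const_mul' _ _ ENNReal.ofReal_ne_top
    _ ≤ ENNReal.ofReal ((((n:ℝ)+1)^(n:ℕ)) * (8:ℝ)^(n:ℕ)) *
          Filter.liminf
            (fun i => ∫⁻ t in Set.Ioi (0:ℝ),
              hausdorffContent n δ {x | ENNReal.ofReal t < f i x}) Filter.atTop :=
        mul_le_mul_right (lintegral_liminf_le hmeas) _
    _ = ENNReal.ofReal ((((n:ℝ)+1)^(n:ℕ)) * (8:ℝ)^(n:ℕ)) *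
          Filter.liminf (fun i => choquetIntegral n δ (f i)) Filter.atTop := rfl
end
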